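/- arXiv:2510.23759 — 4 statements merged into one kernel-verified Lean document; each statement's English description precedes it below -/
import Mathlib

section
/- Let G be a cyclic p-group and U a finitely generated module over the group algebra F G, where F is a field of characteristic p. If the G-fixed points U^G equal Ĝ·U (the image of multiplication by the sum of all group elements), then U is a free FG-module. -/
open Finset in
lemma aux_geom {R : Type*} [Ring R] (p n : ℕ) (hp : p.Prime) [CharP R p] (x : R) :
    ∑ k ∈ Finset.range (p ^ n), (x + 1) ^ k = x ^ (p ^ n - 1) := by
  have hN : 1 ≤ p ^ n := Nat.one_le_pow _ _ hp.pos
  set N := p ^ n with hNdef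
  have h1 : ∀ k : ℕ, (x + 1) ^ k = ∑ m ∈ Finset.Ico 0 (k + 1), x ^ m * (k.choose m : R) := by
    intro k
    rw [Commute.add_pow (Commute.one_right x) k]
    simp
  calc ∑ k ∈ range N, (x + 1) ^ k
      = ∑ k ∈ Finset.Ico 0 N, ∑ m ∈ Finset.Ico 0 (k + 1), x ^ m * (k.choose m : R) := by
        rw [range_eq_Ico]; exact Finset.sum_congr rfl fun k _ => h1 k
    _ = ∑ m ∈ Finset.Ico 0 N, ∑ k ∈ Finset.Ico m N, x ^ m * (k.choose m : R) :=
        (Finset.sum_Ico_Ico_comm 0 N fun m k => x ^ m * (k.choose m : R)).symm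
    _ = ∑ m ∈ range N, x ^ m * ((N.choose (m + 1) : ℕ) : R) := by
        rw [range_eq_Ico]
        refine Finset.sum_congr rfl fun m _ => ?_
        rw [← Finset.mul_sum, ← Nat.cast_sum]
        congr 2
        have : Finset.Ico m N = Finset.Icc m (N - 1) := by
          conv_lhs => rw [show N = (N-1)+1 by omega]
          exact Finset.Ico_add_one_right_eq_Icc m (N-1)
        rw [this, Nat.sum_Icc_choose (N - 1) m]
        congr 1
        omega
    _ = x ^ (N - 1) := by
        have hsplit : N = (N - 1) + 1 := by omega
        rw [show Finset.range N = Finset.range ((N-1)+1) by rw [← hsplit], Finset.sum_range_succ]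
        have hz : ∀ m ∈ range (N - 1), x ^ m * ((N.choose (m + 1) : ℕ) : R) = 0 := by
          intro m hm
          rw [Finset.mem_range] at hm
          have hdvd : p ∣ N.choose (m + 1) := by
            refine hp.dvd_choose_pow (by omega) ?_
            rw [← hNdef]; omega
          rw [(CharP.cast_eq_zero_iff R p _).2 hdvd, mul_zero]
        rw [Finset.sum_eq_zero hz, zero_add]
        have : N.choose ((N - 1) + 1) = 1 := by rw [← hsplit]; exact Nat.choose_self N
        rw [this, Nat.cast_one, mul_one]

lemma aux_charP (F G : Type*) [Field F] [Group G] (p : ℕ) [CharP F p] :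
    CharP (MonoidAlgebra F G) p :=
  charP_of_injective_algebraMap (algebraMap F (MonoidAlgebra F G)).injective p

lemma aux_alg (F G : Type) [Field F] [Group G] [Fintype G] (p n : ℕ) (hp : p.Prime) [CharP F p]
    (hcard : Fintype.card G = p ^ n) (g₀ : G) (hg₀ : ∀ x : G, x ∈ Subgroup.zpowers g₀) :
    (MonoidAlgebra.of F G g₀ - 1) ^ (Fintype.card G) = 0 ∧
      ∑ g : G, MonoidAlgebra.of F G g
        = (MonoidAlgebra.of F G g₀ - 1) ^ (Fintype.card G - 1) := by
  haveI := aux_charP F G p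
  set x : MonoidAlgebra F G := MonoidAlgebra.of F G g₀ - 1 with hx
  have hx1 : (MonoidAlgebra.of F G g₀ : MonoidAlgebra F G) = x + 1 := by rw [hx, sub_add_cancel]
  have horder : orderOf g₀ = Fintype.card G := by rw [orderOf_eq_card_of_forall_mem_zpowers hg₀, Nat.card_eq_fintype_card]
  constructor
  · haveI := Fact.mk hp
    rw [hcard, sub_pow_char_pow_of_commute p n (Commute.one_right _)]
    rw [← map_pow, one_pow, ← hcard, ← horder, pow_orderOf_eq_one, MonoidAlgebra.of_apply]
    simp [MonoidAlgebra.one_def]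
  · have hbij : Function.Bijective (fun k : Fin (Fintype.card G) => g₀ ^ (k : ℕ)) := by
      rw [Fintype.bijective_iff_injective_and_card]
      refine ⟨fun a b hab => ?_, by simp⟩
      have := pow_injOn_Iio_orderOf (x := g₀) (by simp [horder])
        (by simp [horder]) hab
      exact Fin.ext this
    rw [← Function.Bijective.sum_comp hbij (fun g => MonoidAlgebra.of F G g)]
    have : ∀ k : Fin (Fintype.card G),
        (MonoidAlgebra.of F G (g₀ ^ (k : ℕ)) : MonoidAlgebra F G) = (x + 1) ^ (k : ℕ) := by
      intro k; rw [map_pow, hx1]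
    rw [Fintype.sum_congr _ _ this]
    rw [Fin.sum_univ_eq_sum_range (fun k => (x + 1) ^ k) (Fintype.card G), hcard]
    exact aux_geom p n hp x

lemma aux_rank {F U : Type*} [Field F] [AddCommGroup U] [Module F U] [Module.Finite F U]
    (X : Module.End F U) (N : ℕ) (hN : 1 ≤ N) (hXN : X ^ N = 0)
    (hker : LinearMap.ker X = LinearMap.range (X ^ (N - 1))) :
    ∀ j, j ≤ N → Module.finrank F (LinearMap.range (X ^ (N - j)))
      = j * Module.finrank F (LinearMap.ker X) := by
  intro j
  induction j with
  | zero =>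
    intro _
    rw [Nat.sub_zero, hXN, LinearMap.range_zero, zero_mul, finrank_bot]
  | succ j ih =>
    intro hj
    set i := N - (j + 1) with hi
    have hi1 : i + 1 = N - j := by omega
    have hmem : ∀ v ∈ LinearMap.range (X ^ i), X v ∈ LinearMap.range (X ^ (i + 1)) := by
      rintro _ ⟨u, rfl⟩
      exact ⟨u, by rw [pow_succ']; rfl⟩
    set Y := X.restrict hmem with hY
    have hsurj : Function.Surjective Y := by
      rintro ⟨_, u, rfl⟩
      refine ⟨⟨(X ^ i) u, ⟨u, rfl⟩⟩, ?_⟩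
      apply Subtype.ext
      show X ((X ^ i) u) = (X ^ (i + 1)) u
      rw [pow_succ']; rfl
    have hle : LinearMap.ker X ≤ LinearMap.range (X ^ i) := by
      rw [hker]
      rintro _ ⟨u, rfl⟩
      refine ⟨(X ^ (N - 1 - i)) u, ?_⟩
      show (X ^ i * X ^ (N - 1 - i)) u = (X ^ (N - 1)) u
      rw [← pow_add]
      congr 2
      omega
    have hrn := Y.finrank_range_add_finrank_ker
    rw [LinearMap.range_eq_top.2 hsurj, finrank_top] at hrn
    have hkerY : Module.finrank F (LinearMap.ker Y) = Module.finrank F (LinearMap.ker X) := by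
      rw [hY, LinearMap.ker_restrict]
      exact (Submodule.comapSubtypeEquivOfLe hle).finrank_eq
    rw [hkerY, hi1, ih (by omega)] at hrn
    rw [← hrn]
    ring

set_option maxHeartbeats 1000000 in
/-- Let `G` be a cyclic `p`-group and `U` a finitely generated module over the
group algebra `FG`, `F` a field of characteristic `p` (given by a representation
`ρ : Representation F G U` with `U` finitely generated over `F`).  If the `G`-fixed points
`U^G` equal `Ĝ·U`, the image of multiplication by the sum of all group elements, then `U` is a
free `FG`-module. -/
theorem stmt_1 (p : ℕ) (hp : p.Prime) (F G U : Type) [Field F] [CharP F p]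
    [Group G] [Fintype G] (hG : IsPGroup p G) (hcyc : IsCyclic G)
    [AddCommGroup U] [Module F U] [Module.Finite F U]
    (ρ : Representation F G U)
    (hfix : ρ.invariants = LinearMap.range (∑ g : G, ρ g)) :
    Module.Free (MonoidAlgebra F G) ρ.asModule := by
  classical
  haveI := Fact.mk hp
  obtain ⟨g₀, hg₀⟩ := hcyc.exists_generator
  obtain ⟨n, hn⟩ := (IsPGroup.iff_card.mp hG)
  rw [Nat.card_eq_fintype_card] at hn
  set N := Fintype.card G with hNdef
  have hN1 : 1 ≤ N := Fintype.card_pos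
  -- the algebra element x = g₀ - 1
  set A := MonoidAlgebra F G with hA
  set x : A := MonoidAlgebra.of F G g₀ - 1 with hxdef
  have halg : x ^ N = 0 ∧ ∑ g : G, MonoidAlgebra.of F G g = x ^ (N - 1) :=
    aux_alg F G p n hp hn g₀ hg₀
  -- the endomorphism X = ρ g₀ - 1
  set X : Module.End F U := ρ g₀ - 1 with hXdef
  have hX : ρ.asAlgebraHom x = X := by
    rw [hxdef, map_sub, map_one, Representation.asAlgebraHom_of]
  have hXpow : ∀ j, ρ.asAlgebraHom (x ^ j) = X ^ j := fun j => by rw [map_pow, hX]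
  have hXN : X ^ N = 0 := by rw [← hXpow, halg.1, map_zero]
  have hSum : (∑ g : G, ρ g) = X ^ (N - 1) := by
    rw [← hXpow, ← halg.2, map_sum]
    exact Finset.sum_congr rfl fun g _ => (Representation.asAlgebraHom_of ρ g).symm
  -- invariants = ker X
  have hinv : ρ.invariants = LinearMap.ker X := by
    ext v
    rw [Representation.mem_invariants, LinearMap.mem_ker]
    constructor
    · intro h
      rw [hXdef]
      simp [h g₀]
    · intro h g
      have hv : ρ g₀ v = v := by
        have := h
        rw [hXdef] at this
        simpa [sub_eq_zero] using this
      obtain ⟨k, rfl⟩ := Submonoid.mem_powers_iff _ _ |>.mp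
        (mem_powers_iff_mem_zpowers.mpr (hg₀ g))
      rw [map_pow, Module.End.pow_apply]
      exact Function.iterate_fixed hv k
  have hker : LinearMap.ker X = LinearMap.range (X ^ (N - 1)) := by
    rw [← hinv, hfix, hSum]
  -- dimensions
  set e := Module.finrank F (LinearMap.ker X) with he
  have hrank := aux_rank X N hN1 hXN hker
  have hU : Module.finrank F U = N * e := by
    have h0 := hrank N le_rfl
    rw [Nat.sub_self, pow_zero] at h0
    rw [← h0]
    have : LinearMap.range (1 : Module.End F U) = ⊤ := LinearMap.range_eq_top.2 fun v => ⟨v, rfl⟩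
    rw [this, finrank_top]
  have hXU : Module.finrank F (LinearMap.range X) = (N - 1) * e := by
    have := hrank (N - 1) (by omega)
    rw [show N - (N - 1) = 1 by omega, pow_one] at this
    exact this
  -- quotient dimension
  have hquot := Submodule.finrank_quotient_add_finrank (LinearMap.range X)
  set k := Module.finrank F (U ⧸ LinearMap.range X) with hk
  have hke : k = e := by
    rw [hXU, hU] at hquot
    have hNe : N * e = (N - 1) * e + e := by
      conv_lhs => rw [show N = (N - 1) + 1 by omega]
      ring
    omega
  -- lifted generators
  let b : Module.Basis (Fin k) F (U ⧸ LinearMap.range X) := Module.finBasis F _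
  have hmk : ∀ q : U ⧸ LinearMap.range X, ∃ v : U, (LinearMap.range X).mkQ v = q :=
    Submodule.mkQ_surjective _
  choose u hu using fun i => hmk (b i)
  have hlift : ∀ w : U, ∃ (d : Fin k → F) (w' : U), w = (∑ i, d i • u i) + X w' := by
    intro w
    set c : Fin k → F := fun i => b.repr ((LinearMap.range X).mkQ w) i with hc
    have hmem : w - ∑ i, c i • u i ∈ LinearMap.range X := by
      rw [← Submodule.ker_mkQ (LinearMap.range X), LinearMap.mem_ker, map_sub, map_sum]
      simp only [map_smul, hu]
      rw [sub_eq_zero]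
      exact (b.sum_repr _).symm
    obtain ⟨w', hw'⟩ := hmem
    refine ⟨c, w', ?_⟩
    rw [hw']
    abel
  -- move to the monoid algebra module
  haveI tower : IsScalarTower F A ρ.asModule :=
    ⟨fun r a v => by
      show ρ.asAlgebraHom (r • a) v = r • (ρ.asAlgebraHom a v)
      rw [map_smul]
      rfl⟩
  let m : Fin k → ρ.asModule := fun i => ρ.asModuleEquiv.symm (u i)
  let φ : (Fin k → A) →ₗ[A] ρ.asModule :=
    { toFun := fun c => ∑ i, c i • m i
      map_add' := fun c d => by
        simp only [Pi.add_apply, add_smul]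
        rw [Finset.sum_add_distrib]
      map_smul' := fun a c => by
        simp only [Pi.smul_apply, smul_eq_mul, mul_smul, RingHom.id_apply]
        rw [Finset.smul_sum] }
  have hφapply : ∀ c : Fin k → A, φ c = ∑ i, c i • m i := fun c => rfl
  have hkey : ∀ (j : ℕ) (d : Fin k → F),
      ρ.asModuleEquiv (φ (fun i => x ^ j * algebraMap F A (d i)))
        = (X ^ j) (∑ i, d i • u i) := by
    intro j d
    rw [hφapply, map_sum, map_sum]
    refine Finset.sum_congr rfl fun i _ => ?_
    show ρ.asAlgebraHom (x ^ j * algebraMap F A (d i)) (ρ.asModuleEquiv (m i)) = _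
    rw [map_mul, hXpow, Module.End.mul_apply]
    have h2 : ρ.asAlgebraHom (algebraMap F A (d i)) (ρ.asModuleEquiv (m i)) = d i • u i := by
      show ρ.asAlgebraHom (algebraMap F A (d i)) (u i) = d i • u i
      rw [AlgHom.commutes]
      rfl
    rw [h2]
  have hstep : ∀ (j : ℕ) (v : ρ.asModule), ∃ (c : Fin k → A) (w : U),
      ρ.asModuleEquiv v = ρ.asModuleEquiv (φ c) + (X ^ j) w := by
    intro j
    induction j with
    | zero =>
      intro v
      refine ⟨0, ρ.asModuleEquiv v, ?_⟩
      rw [map_zero φ, map_zero, pow_zero]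
      simp
    | succ j ih =>
      intro v
      obtain ⟨c, w, hw⟩ := ih v
      obtain ⟨d, w', hw'⟩ := hlift w
      refine ⟨c + fun i => x ^ j * algebraMap F A (d i), w', ?_⟩
      rw [map_add φ, map_add ρ.asModuleEquiv, hkey j d, hw, hw']
      rw [map_add (X ^ j), pow_succ, Module.End.mul_apply]
      abel
  have hφsurj : Function.Surjective φ := by
    intro v
    obtain ⟨c, w, hw⟩ := hstep N v
    rw [hXN, LinearMap.zero_apply, add_zero] at hw
    exact ⟨c, ρ.asModuleEquiv.injective hw.symm⟩
  -- dimensions over F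
  haveI : Module.Finite F A := Module.Finite.of_basis (MonoidAlgebra.basis G F : Module.Basis G F A)
  have hdimA : Module.finrank F A = N := by rw [Module.finrank_eq_card_basis (MonoidAlgebra.basis G F)]
  have hdimPi : Module.finrank F (Fin k → A) = k * N := by
    rw [Module.finrank_pi_fintype]
    simp [hdimA, Finset.sum_const, Fintype.card_fin]
  haveI : Module.Finite F ρ.asModule := inferInstanceAs (Module.Finite F U)
  have hdimM : Module.finrank F ρ.asModule = N * e := hU
  have hdims : Module.finrank F (Fin k → A) = Module.finrank F ρ.asModule := by
    rw [hdimPi, hdimM, hke]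
    ring
  let φ' := φ.restrictScalars F
  have hφ'surj : Function.Surjective φ' := hφsurj
  have hφinj : Function.Injective φ :=
    (LinearMap.injective_iff_surjective_of_finrank_eq_finrank hdims).mpr hφ'surj
  exact Module.Free.of_equiv (LinearEquiv.ofBijective φ ⟨hφinj, hφsurj⟩)
end

section
/- Let G be a cyclic p-group, N a normal subgroup, and U an RG-lattice such that the restriction of U to N is an RN-permutation module. If U|_N = F ⊕ T with F a permutation module having no trivial direct summands and T a trivial RN-lattice (a maximal trivial summand), then the image of the natural composite map U^N → U_N → U_N/πU_N equals the image of T. In particular this image is independent of the chosen decomposition of U|_N. -/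
open Pointwise

/-- The augmentation submodule `I_N·U` of an `R`-linear `G`-representation `U`:
the `R`-span of the elements `n·u - u` for `n ∈ N`, `u ∈ U`. -/
def augSub {R G U : Type} [CommRing R] [Group G] [AddCommGroup U] [Module R U]
    (ρ : Representation R G U) (N : Subgroup G) : Submodule R U :=
  Submodule.span R {x : U | ∃ n ∈ N, ∃ u : U, x = ρ n u - u}

lemma mem_smul_top_iff {R M : Type} [CommRing R] [AddCommGroup M] [Module R M] (a : R) (v : M) :
    v ∈ a • (⊤ : Submodule R M) ↔ ∃ w, v = a • w := by
  rw [← Submodule.mem_toAddSubmonoid, Submodule.pointwise_smul_toAddSubmonoid,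
    AddSubmonoid.mem_smul_pointwise_iff_exists]
  simp [eq_comm]

/-- Let `G` be a cyclic `p`-group, `N ⊴ G`, and `U` an `RG`-lattice whose
restriction to `N` is an `RN`-permutation module, with `U|_N = F ⊕ T` where `F` is an
`RN`-permutation module having no trivial direct summands and `T` is a trivial `RN`-lattice
(a maximal trivial summand).  Then the image of the natural composite map
`U^N → U_N → U_N/πU_N` equals the image of `T`; in particular this image is independent of the
chosen decomposition of `U|_N`. -/
theorem stmt_6 (p : ℕ) (hp : p.Prime) (R G U : Type) [CommRing R] [IsDomain R]
    [IsDiscreteValuationRing R] [IsAdicComplete (IsLocalRing.maximalIdeal R) R] [CharZero R]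
    (π : R) (hπ : Ideal.span {π} = IsLocalRing.maximalIdeal R)
    (hres : (p : R) ∈ IsLocalRing.maximalIdeal R)
    [Group G] [Fintype G] (hG : IsPGroup p G) (hcyc : IsCyclic G)
    (N : Subgroup G) [N.Normal]
    [AddCommGroup U] [Module R U] [Module.Finite R U] [Module.Free R U]
    (ρ : Representation R G U)
    (F T : Submodule R U)
    (hcompl : IsCompl F T)
    (hFinv : ∀ n ∈ N, F.map (ρ n) ≤ F)
    (hTtriv : ∀ n ∈ N, ∀ t ∈ T, ρ n t = t)
    (hFperm : ∃ (ι : Type) (b : Module.Basis ι R ↥F),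
      ∀ n ∈ N, ∀ i : ι, ∃ j, ρ n (↑(b i) : U) = (↑(b j) : U))
    (hFnotriv : ∀ W W' : Submodule R U, W ⊔ W' = F → Disjoint W W' →
      (∀ n ∈ N, W.map (ρ n) ≤ W) → (∀ n ∈ N, W'.map (ρ n) ≤ W') →
      (∀ n ∈ N, ∀ w ∈ W, ρ n w = w) → W = ⊥) :
    Submodule.map
        ((π • (⊤ : Submodule R (U ⧸ augSub ρ N))).mkQ ∘ₗ (augSub ρ N).mkQ)
        (Representation.invariants (ρ.comp N.subtype))
      = Submodule.map
        ((π • (⊤ : Submodule R (U ⧸ augSub ρ N))).mkQ ∘ₗ (augSub ρ N).mkQ) T := by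
  classical
  obtain ⟨ι, b, hb⟩ := hFperm
  haveI : Nontrivial R := inferInstance
  haveI : IsNoetherianRing R := inferInstance
  haveI : IsNoetherian R U := isNoetherian_of_isNoetherianRing_of_finite R U
  haveI : Module.Finite R ↥F := inferInstance
  haveI : Finite ι := Module.Finite.finite_basis b
  haveI : Fintype ι := Fintype.ofFinite ι
  haveI : Fintype ↥N := Fintype.ofFinite ↥N
  set q : U →ₗ[R] (U ⧸ augSub ρ N) ⧸ (π • (⊤ : Submodule R (U ⧸ augSub ρ N))) :=
    (π • (⊤ : Submodule R (U ⧸ augSub ρ N))).mkQ ∘ₗ (augSub ρ N).mkQ with hqdef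
  -- kernel facts
  have hker : ∀ w : U, w ∈ augSub ρ N ⊔ π • (⊤ : Submodule R U) → q w = 0 := by
    intro w hw
    obtain ⟨a, ha, s, hs, rfl⟩ := Submodule.mem_sup.1 hw
    obtain ⟨w', rfl⟩ := (mem_smul_top_iff π s).1 hs
    have h1 : q a = 0 := by
      have : (augSub ρ N).mkQ a = 0 := (Submodule.Quotient.mk_eq_zero _).2 ha
      simp [q, LinearMap.comp_apply, this]
    have h2 : q (π • w') = 0 := by
      have : (augSub ρ N).mkQ (π • w') ∈ π • (⊤ : Submodule R (U ⧸ augSub ρ N)) := by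
        rw [map_smul]
        exact Submodule.smul_mem_pointwise_smul _ _ _ Submodule.mem_top
      simp only [q, LinearMap.comp_apply]
      exact (Submodule.Quotient.mk_eq_zero _).2 this
    rw [map_add, h1, h2, add_zero]
  -- the family of basis vectors in U
  set v : ι → U := fun i => ((b i : ↥F) : U) with hvdef
  have hv_inj : Function.Injective v := Subtype.val_injective.comp b.injective
  have hv_li : LinearIndependent R v := b.linearIndependent.map' F.subtype (Submodule.ker_subtype F)
  have hv_ne : ∀ i, v i ≠ 0 := by
    intro i h
    exact b.ne_zero i (by simpa [hvdef] using h)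
  -- permutation action of N on ι
  have hperm : ∀ n : ↥N, ∀ i : ι, ∃ j, ρ (n : G) (v i) = v j := fun n i => hb n n.2 i
  choose σ hσ using hperm
  have hσ_one : ∀ i, σ 1 i = i := by
    intro i
    apply hv_inj
    rw [← hσ 1 i]
    simp
  have hσ_mul : ∀ (n m : ↥N) (i : ι), σ (n * m) i = σ n (σ m i) := by
    intro n m i
    apply hv_inj
    rw [← hσ, ← hσ, ← hσ]
    simp [map_mul]
  letI : SMul ↥N ι := ⟨σ⟩
  letI : MulAction ↥N ι := { one_smul := hσ_one, mul_smul := hσ_mul }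
  have hsmul_def : ∀ (n : ↥N) (i : ι), n • i = σ n i := fun _ _ => rfl
  letI setoidι : Setoid ι := MulAction.orbitRel ↥N ι
  -- no trivial orbits
  have hnontriv : ∀ i : ι, ∃ n : ↥N, σ n i ≠ i := by
    intro i
    by_contra hcon
    push_neg at hcon
    set W : Submodule R U := Submodule.span R {v i} with hWdef
    set W' : Submodule R U := Submodule.span R (v '' {i}ᶜ) with hW'def
    have hWW' : W ⊔ W' = F := by
      rw [hWdef, hW'def, ← Submodule.span_union, ← Set.image_singleton, ← Set.image_union,
        Set.union_compl_self, Set.image_univ]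
      have : Set.range v = F.subtype '' Set.range b := by
        rw [← Set.range_comp]; rfl
      rw [this, ← Submodule.map_span, b.span_eq, Submodule.map_top, Submodule.range_subtype]
    have hdisj : Disjoint W W' := by
      have := hv_li.disjoint_span_image (s := {i}) (t := {i}ᶜ) disjoint_compl_right
      simpa [hWdef, hW'def, Set.image_singleton] using this
    have hWinv : ∀ n ∈ N, W.map (ρ n) ≤ W := by
      intro n hn
      rw [hWdef, Submodule.map_span, Set.image_singleton]
      have : ρ n (v i) = v i := by
        have := hσ ⟨n, hn⟩ i
        rw [hcon ⟨n, hn⟩] at this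
        exact this
      rw [this]
    have hW'inv : ∀ n ∈ N, W'.map (ρ n) ≤ W' := by
      intro n hn
      rw [hW'def, Submodule.map_span]
      apply Submodule.span_mono
      rintro x ⟨y, ⟨j, hj, rfl⟩, rfl⟩
      refine ⟨σ ⟨n, hn⟩ j, ?_, (hσ ⟨n, hn⟩ j).symm⟩
      intro hji
      apply hj
      have : σ (⟨n, hn⟩ : ↥N)⁻¹ (σ ⟨n, hn⟩ j) = j := by
        rw [← hσ_mul, inv_mul_cancel, hσ_one]
      rw [Set.mem_singleton_iff] at hji ⊢
      rw [← this, hji, hcon]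
    have hWtriv : ∀ n ∈ N, ∀ w ∈ W, ρ n w = w := by
      intro n hn w hw
      obtain ⟨r, rfl⟩ := Submodule.mem_span_singleton.1 hw
      rw [map_smul]
      congr 1
      have := hσ ⟨n, hn⟩ i
      rw [hcon ⟨n, hn⟩] at this
      exact this
    have hW := hFnotriv W W' hWW' hdisj hWinv hW'inv hWtriv
    have : v i ∈ W := Submodule.mem_span_singleton_self _
    rw [hW, Submodule.mem_bot] at this
    exact hv_ne i this
  -- p-group facts
  have hN : IsPGroup p ↥N := hG.to_subgroup N
  -- KEY: every N-invariant element of F is killed by q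
  have hkey : ∀ y : U, y ∈ F → (∀ n : ↥N, ρ (n : G) y = y) → q y = 0 := by
    intro y hyF hyinv
    apply hker
    set c : ι →₀ R := b.repr ⟨y, hyF⟩ with hcdef
    -- invariance of coefficients along the action
    have hc : ∀ (n : ↥N) (i : ι), c (σ n i) = c i := by
      intro n i₀
      have hmem : ∀ x ∈ F, ρ (n : G) x ∈ F := fun x hx =>
        hFinv (n : G) n.2 ⟨x, hx, rfl⟩
      set φ : ↥F →ₗ[R] ↥F := (ρ (n : G)).restrict hmem with hφdef
      have hφb : ∀ i, φ (b i) = b (σ n i) := by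
        intro i
        apply Subtype.val_injective
        simpa [hφdef, LinearMap.restrict_apply] using hσ n i
      have hφy : φ ⟨y, hyF⟩ = ⟨y, hyF⟩ := by
        apply Subtype.val_injective
        simpa [hφdef, LinearMap.restrict_apply] using hyinv n
      have hrep : c = ∑ i : ι, c i • Finsupp.single (σ n i) (1 : R) := by
        conv_lhs => rw [hcdef, ← hφy]
        conv_lhs => rw [show (⟨y, hyF⟩ : ↥F) = ∑ i : ι, c i • b i from (b.sum_repr _).symm]
        rw [map_sum, map_sum]
        refine Finset.sum_congr rfl fun i _ => ?_
        rw [map_smul, map_smul, hφb, Module.Basis.repr_self]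
      have := congrArg (fun f : ι →₀ R => f (σ n i₀)) hrep
      simp only [Finsupp.finset_sum_apply, Finsupp.smul_apply, Finsupp.single_apply,
        smul_eq_mul, mul_ite, mul_one, mul_zero] at this
      rw [this]
      have hinj : Function.Injective (σ n) := fun a a' h => by
        have : σ n⁻¹ (σ n a) = σ n⁻¹ (σ n a') := by rw [h]
        rwa [← hσ_mul, ← hσ_mul, inv_mul_cancel, hσ_one, hσ_one] at this
      rw [Finset.sum_congr rfl (fun i _ => by rw [show (σ n i = σ n i₀) = (i = i₀) from
        propext ⟨fun h => hinj h, fun h => by rw [h]⟩])]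
      simp
    -- express y as a sum over orbits
    have hy_sum : y = ∑ i : ι, c i • v i := by
      have : (⟨y, hyF⟩ : ↥F) = ∑ i : ι, c i • b i := (b.sum_repr _).symm
      have := congrArg (Subtype.val : ↥F → U) this
      simpa [hvdef] using this
    rw [hy_sum]
    have horb : ∀ ω : Quotient (MulAction.orbitRel ↥N ι),
        (∑ i ∈ Finset.univ.filter (fun i => ⟦i⟧ = ω), c i • v i) ∈
          augSub ρ N ⊔ π • (⊤ : Submodule R U) := by
      intro ω
      set i₀ := ω.out with hi₀
      have hfib : ∀ i ∈ Finset.univ.filter (fun i => ⟦i⟧ = ω), ∃ n : ↥N, σ n i₀ = i := by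
        intro i hi
        rw [Finset.mem_filter] at hi
        have : (⟦i⟧ : Quotient (MulAction.orbitRel ↥N ι)) = ⟦i₀⟧ := by
          rw [hi.2, hi₀, Quotient.out_eq]
        have h2 : i ∈ MulAction.orbit ↥N i₀ := Quotient.exact this
        exact MulAction.mem_orbit_iff.1 h2
      -- constant coefficient on the fiber
      have hcfib : ∀ i ∈ Finset.univ.filter (fun i => ⟦i⟧ = ω), c i = c i₀ := by
        intro i hi
        obtain ⟨n, rfl⟩ := hfib i hi
        exact hc n i₀
      rw [Finset.sum_congr rfl (fun i hi => by rw [hcfib i hi]), ← Finset.smul_sum]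
      apply Submodule.smul_mem
      -- the orbit sum
      have hcard : (p : ℕ) ∣ (Finset.univ.filter (fun i => ⟦i⟧ = ω)).card := by
        haveI : Fintype ↥(MulAction.orbit ↥N i₀) := Fintype.ofFinite _
        have hfil : Finset.univ.filter (fun i => ⟦i⟧ = ω) =
            (MulAction.orbit ↥N i₀).toFinset := by
          ext i
          simp only [Finset.mem_filter, Finset.mem_univ, true_and, Set.mem_toFinset]
          rw [← Quotient.out_eq ω, ← hi₀]
          exact ⟨fun h => (Quotient.exact h : i ∈ MulAction.orbit ↥N i₀),
            fun h => Quotient.sound (h : setoidι.r i i₀)⟩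
        rw [hfil, Set.toFinset_card]
        haveI : Fact p.Prime := ⟨hp⟩
        obtain ⟨k, hk⟩ := IsPGroup.iff_card.1 hN
        have hdvd : Fintype.card ↥(MulAction.orbit ↥N i₀) ∣ p ^ k := by
          rw [← hk, Nat.card_eq_fintype_card]
          exact ⟨Fintype.card ↥(MulAction.stabilizer ↥N i₀),
            (MulAction.card_orbit_mul_card_stabilizer_eq_card_group ↥N i₀).symm⟩
        obtain ⟨m, hm, hcm⟩ := (Nat.dvd_prime_pow hp).1 hdvd
        rcases Nat.eq_zero_or_pos m with hm0 | hm1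
        · exfalso
          rw [hm0, pow_zero] at hcm
          obtain ⟨x, hx⟩ := Fintype.card_eq_one_iff.1 hcm
          obtain ⟨n, hn⟩ := hnontriv i₀
          apply hn
          have h1 : (⟨σ n i₀, MulAction.mem_orbit i₀ n⟩ : ↥(MulAction.orbit ↥N i₀)) = x := hx _
          have h2 : (⟨i₀, MulAction.mem_orbit_self i₀⟩ : ↥(MulAction.orbit ↥N i₀)) = x := hx _
          have := h1.trans h2.symm
          exact congrArg Subtype.val this
        · rw [hcm]
          exact dvd_pow_self p hm1.ne'
      -- orbit sum lies in aug ⊔ π•⊤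
      have hsplit : (∑ i ∈ Finset.univ.filter (fun i => ⟦i⟧ = ω), v i) =
          (∑ i ∈ Finset.univ.filter (fun i => ⟦i⟧ = ω), (v i - v i₀)) +
            ((Finset.univ.filter (fun i => ⟦i⟧ = ω)).card) • v i₀ := by
        rw [Finset.sum_sub_distrib, Finset.sum_const, sub_add_cancel]
      rw [hsplit]
      apply Submodule.add_mem
      · apply Submodule.mem_sup_left
        apply Submodule.sum_mem
        intro i hi
        obtain ⟨n, rfl⟩ := hfib i hi
        rw [← hσ]
        exact Submodule.subset_span ⟨(n : G), n.2, v i₀, rfl⟩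
      · apply Submodule.mem_sup_right
        obtain ⟨m', hm'⟩ := hcard
        rw [← Nat.cast_smul_eq_nsmul R]
        rw [← hπ, Ideal.mem_span_singleton'] at hres
        obtain ⟨r, hr⟩ := hres
        rw [hm']
        push_cast
        rw [← hr, show r * π * (m' : R) = π * (r * (m' : R)) by ring, mul_smul]
        exact Submodule.smul_mem_pointwise_smul _ _ _ Submodule.mem_top
    haveI : Finite (Quotient (MulAction.orbitRel ↥N ι)) := Quotient.finite _
    haveI : Fintype (Quotient (MulAction.orbitRel ↥N ι)) := Fintype.ofFinite _
    rw [← Finset.sum_fiberwise Finset.univ (fun i => (⟦i⟧ : Quotient (MulAction.orbitRel ↥N ι)))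
      (fun i => c i • v i)]
    exact Submodule.sum_mem _ fun ω _ => horb ω
  -- conclude
  apply le_antisymm
  · rintro x hx
    rw [Submodule.mem_map] at hx
    obtain ⟨u, hu, rfl⟩ := hx
    have husum : u ∈ F ⊔ T := by
      rw [codisjoint_iff.1 hcompl.codisjoint]; trivial
    obtain ⟨y, hy, z, hz, rfl⟩ := Submodule.mem_sup.1 husum
    have hyinv : ∀ n : ↥N, ρ (n : G) y = y := by
      intro n
      have h1 : ρ (n : G) (y + z) = y + z := (Representation.mem_invariants _ _).1 hu n
      have h2 : ρ (n : G) z = z := hTtriv (n : G) n.2 z hz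
      rw [map_add, h2] at h1
      exact add_right_cancel h1
    rw [map_add, hkey y hy hyinv, zero_add]
    exact Submodule.mem_map_of_mem hz
  · apply Submodule.map_mono
    intro t ht
    exact (Representation.mem_invariants _ _).2 fun n => hTtriv (n : G) n.2 t ht
end

section
/- Let G be a cyclic group of order p², N its subgroup of order p, R a complete discrete valuation ring in mixed characteristic, and U an RG-lattice such that U|_N is an RN-permutation module, U_N is an RG-lattice (R-torsion-free), and U^N = Y ⊕ X as RG-modules with N acting trivially on X and X maximal trivial. Then X ∩ N̂U = pX, where N̂ = Σ_{n∈N} n. -/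
open Pointwise

/-- Let `G` be cyclic of order `p²`, `N` its subgroup of order `p`, `R` a
complete discrete valuation ring in mixed characteristic, and `U` an `RG`-lattice such that
`U|_N` is an `RN`-permutation module, `U_N` is `R`-torsion-free, and `U^N = Y ⊕ X` as
`RG`-modules with `G` acting trivially on `X` and `X` a maximal trivial summand (`Y` has no
nonzero trivial `RG`-direct summand).  Then `X ⊓ N̂U = pX`, where `N̂ = Σ_{n∈N} n`. -/
theorem stmt_8 (p : ℕ) (hp : p.Prime) (R G U : Type) [CommRing R] [IsDomain R]
    [IsDiscreteValuationRing R] [IsAdicComplete (IsLocalRing.maximalIdeal R) R] [CharZero R]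
    (hres : (p : R) ∈ IsLocalRing.maximalIdeal R)
    [Group G] [Fintype G] (hcyc : IsCyclic G) (hcard : Fintype.card G = p ^ 2)
    (N : Subgroup G) [Fintype ↥N] (hN : Fintype.card ↥N = p)
    [AddCommGroup U] [Module R U] [Module.Finite R U] [Module.Free R U]
    (ρ : Representation R G U)
    -- U restricted to N is an RN-permutation module
    (hperm : ∃ (ι : Type) (b : Module.Basis ι R U), ∀ n ∈ N, ∀ i : ι, ∃ j, ρ n (b i) = b j)
    -- U_N is R-torsion-free
    (hUN : NoZeroSMulDivisors R (U ⧸ augSub ρ N))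
    (X Y : Submodule R U)
    (hsup : Y ⊔ X = Representation.invariants (ρ.comp N.subtype))
    (hdisj : Disjoint Y X)
    (hXinv : ∀ g : G, X.map (ρ g) ≤ X) (hYinv : ∀ g : G, Y.map (ρ g) ≤ Y)
    (hXtriv : ∀ (g : G), ∀ x ∈ X, ρ g x = x)
    -- X is a maximal trivial summand: Y has no nonzero trivial RG-direct summand
    (hmax : ∀ W W' : Submodule R U, W ⊔ W' = Y → Disjoint W W' →
      (∀ g : G, W.map (ρ g) ≤ W) → (∀ g : G, W'.map (ρ g) ≤ W') →
      (∀ (g : G), ∀ w ∈ W, ρ g w = w) → W = ⊥) :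
    X ⊓ LinearMap.range (∑ n : ↥N, ρ (↑n : G)) = (p : R) • X := by
  classical
  obtain ⟨g, hg⟩ := hcyc.exists_generator
  have horder : orderOf g = p ^ 2 := by
    rw [orderOf_eq_card_of_forall_mem_zpowers hg, Nat.card_eq_fintype_card, hcard]
  have hcomm : ∀ a b : G, a * b = b * a := by
    intro a b
    obtain ⟨i, hi⟩ := hg a
    obtain ⟨j, hj⟩ := hg b
    rw [← hi, ← hj, ← zpow_add, ← zpow_add, add_comm]
  set h : G := g ^ p with hh
  set σ : U →ₗ[R] U := ∑ n : ↥N, ρ (↑n : G) with hσ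
  have hXle : X ≤ Representation.invariants (ρ.comp N.subtype) := hsup ▸ le_sup_right
  -- σ commutes with every ρ a
  have hσcomm : ∀ (a : G) (u : U), σ (ρ a u) = ρ a (σ u) := by
    intro a u
    simp only [hσ, LinearMap.sum_apply, map_sum]
    refine Finset.sum_congr rfl fun n _ => ?_
    rw [← Module.End.mul_apply, ← map_mul, hcomm, map_mul, Module.End.mul_apply]
  -- σ u is N-invariant
  have hσmem : ∀ u : U, σ u ∈ Representation.invariants (ρ.comp N.subtype) := by
    intro u
    rw [Representation.mem_invariants]
    intro n
    show ρ (↑n) (σ u) = σ u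
    simp only [hσ, LinearMap.sum_apply, map_sum]
    refine Fintype.sum_equiv (Equiv.mulLeft n) _ _ fun m => ?_
    rw [← Module.End.mul_apply, ← map_mul, Equiv.coe_mulLeft, Subgroup.coe_mul]
  -- σ = p on invariants
  have hσinv : ∀ v ∈ Representation.invariants (ρ.comp N.subtype), σ v = (p : R) • v := by
    intro v hv
    rw [Representation.mem_invariants] at hv
    simp only [hσ, LinearMap.sum_apply]
    calc (∑ n : ↥N, ρ (↑n : G) v) = ∑ _n : ↥N, v :=
          Finset.sum_congr rfl fun n _ => hv n
      _ = (p : R) • v := by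
          rw [Finset.sum_const, Finset.card_univ, hN, ← Nat.cast_smul_eq_nsmul R]
  -- kernel of σ is contained in augSub
  have hker : ∀ u : U, σ u = 0 → u ∈ augSub ρ N := by
    intro u hu
    have hmem : σ u - (p : R) • u ∈ augSub ρ N := by
      have he : σ u - (p : R) • u = ∑ n : ↥N, (ρ (↑n : G) u - u) := by
        rw [Finset.sum_sub_distrib, Finset.sum_const, Finset.card_univ, hN,
          ← Nat.cast_smul_eq_nsmul R]
        simp only [hσ, LinearMap.sum_apply]
      rw [he]
      exact Submodule.sum_mem _ fun n _ => Submodule.subset_span ⟨↑n, n.2, u, rfl⟩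
    rw [hu, zero_sub] at hmem
    have hmem' : (p : R) • u ∈ augSub ρ N := by
      have := (augSub ρ N).neg_mem hmem; rwa [neg_neg] at this
    have hq : (p : R) • (Submodule.Quotient.mk u : U ⧸ augSub ρ N) = 0 := by
      rw [← Submodule.Quotient.mk_smul, Submodule.Quotient.mk_eq_zero]
      exact hmem'
    have hp0 : (p : R) ≠ 0 := Nat.cast_ne_zero.mpr hp.ne_zero
    have := (smul_eq_zero.mp hq).resolve_left hp0
    rwa [Submodule.Quotient.mk_eq_zero] at this
  -- every element of N is a natural power of h
  have hNpow : ∀ n ∈ N, ∃ k : ℕ, h ^ k = n := by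
    intro n hn
    have h1 : n ^ p = 1 := by
      have h2 : (⟨n, hn⟩ : ↥N) ^ p = 1 := by rw [← hN]; exact pow_card_eq_one
      have := congrArg (Subtype.val) h2
      simpa using this
    obtain ⟨m, hm⟩ := (Submonoid.mem_powers_iff _ _).mp
      (mem_powers_iff_mem_zpowers.mpr (hg n))
    have hdvd : p ^ 2 ∣ m * p := by
      rw [← horder]
      apply orderOf_dvd_of_pow_eq_one
      rw [pow_mul, hm, h1]
    have hpm : p ∣ m := by
      have h3 : p * p ∣ m * p := by rwa [← sq]
      exact (Nat.mul_dvd_mul_iff_right hp.pos).mp h3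
    obtain ⟨k, hk⟩ := hpm
    exact ⟨k, by rw [hh, ← pow_mul, ← hk, hm]⟩
  set τ : U →ₗ[R] U := ρ h - LinearMap.id with hτ
  -- powers of h move elements by range τ
  have hpowmem : ∀ (k : ℕ) (u : U), ρ (h ^ k) u - u ∈ LinearMap.range τ := by
    intro k
    induction k with
    | zero => intro u; simp
    | succ k ih =>
      intro u
      have : ρ (h ^ (k + 1)) u - u
          = (ρ (h ^ k) (ρ h u) - ρ h u) + (ρ h u - u) := by
        rw [pow_succ, map_mul, Module.End.mul_apply]; abel
      rw [this]
      exact Submodule.add_mem _ (ih (ρ h u)) ⟨u, rfl⟩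
  have haug : augSub ρ N ≤ LinearMap.range τ := by
    rw [augSub, Submodule.span_le]
    rintro _ ⟨n, hn, u, rfl⟩
    obtain ⟨k, hk⟩ := hNpow n hn
    rw [← hk]
    exact hpowmem k u
  -- τ commutes with every ρ a
  have hτcomm : ∀ (a : G) (v : U), ρ a (τ v) = τ (ρ a v) := by
    intro a v
    simp only [hτ, LinearMap.sub_apply, LinearMap.id_apply, map_sub]
    rw [← Module.End.mul_apply, ← map_mul, hcomm, map_mul, Module.End.mul_apply]
  refine le_antisymm ?_ ?_
  · rintro x ⟨hxX, u, hu⟩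
    have hgx : ρ g x = x := hXtriv g x hxX
    have h0 : σ (ρ g u - u) = 0 := by
      rw [map_sub, hσcomm, hu, hgx, sub_self]
    obtain ⟨w, hw⟩ := haug (hker _ h0)
    have hiter : ∀ j : ℕ,
        ρ (g ^ j) u = u + τ (∑ i ∈ Finset.range j, ρ (g ^ i) w) := by
      intro j
      induction j with
      | zero => simp
      | succ j ih =>
        have hw' : ρ g u = u + τ w := by rw [hw]; abel
        have e1 : ρ (g ^ (j + 1)) u = ρ g (ρ (g ^ j) u) := by
          rw [pow_succ', map_mul, Module.End.mul_apply]
        have e2 : ρ g (∑ i ∈ Finset.range j, ρ (g ^ i) w)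
            = ∑ i ∈ Finset.range j, ρ (g ^ (i + 1)) w := by
          rw [map_sum]
          exact Finset.sum_congr rfl fun i _ => by
            rw [← Module.End.mul_apply, ← map_mul, ← pow_succ']
        rw [e1, ih, map_add, hτcomm, e2, hw', Finset.sum_range_succ', map_add]
        simp only [pow_zero, map_one, Module.End.one_apply]
        abel
    set c : U := ∑ i ∈ Finset.range p, ρ (g ^ i) w with hc
    have hfix1 : ρ h (u - c) = u - c := by
      have hpit : ρ h u = u + τ c := by rw [hh]; exact hiter p
      rw [map_sub, hpit]
      simp only [hτ, LinearMap.sub_apply, LinearMap.id_apply]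
      abel
    have hfixk : ∀ k : ℕ, ρ (h ^ k) (u - c) = u - c := by
      intro k
      induction k with
      | zero => simp
      | succ k ih => rw [pow_succ, hcomm, map_mul, Module.End.mul_apply, ih, hfix1]
    have hucinv : u - c ∈ Representation.invariants (ρ.comp N.subtype) := by
      rw [Representation.mem_invariants]
      intro n
      obtain ⟨k, hk⟩ := hNpow (↑n) n.2
      show ρ (↑n) (u - c) = u - c
      rw [← hk]
      exact hfixk k
    -- x = p • (u - c) + ∑ ρ(g^i) (σ w)
    have hx : x = (p : R) • (u - c) + ∑ i ∈ Finset.range p, ρ (g ^ i) (σ w) := by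
      have h1 : σ u = σ (u - c) + σ c := by
        rw [← map_add]
        congr 1
        abel
      have h2 : σ c = ∑ i ∈ Finset.range p, ρ (g ^ i) (σ w) := by
        rw [hc, map_sum]
        exact Finset.sum_congr rfl fun i _ => hσcomm _ _
      rw [← hu, h1, h2, hσinv _ hucinv]
    have hzinv := hσmem w
    -- decompose u - c and σ w
    rw [← hsup] at hucinv hzinv
    obtain ⟨y₁, hy₁, x₁, hx₁, hv1⟩ := Submodule.mem_sup.mp hucinv
    obtain ⟨y₂, hy₂, x₂, hx₂, hv2⟩ := Submodule.mem_sup.mp hzinv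
    have hsum : ∑ i ∈ Finset.range p, ρ (g ^ i) (σ w)
        = (∑ i ∈ Finset.range p, ρ (g ^ i) y₂) + (p : R) • x₂ := by
      calc ∑ i ∈ Finset.range p, ρ (g ^ i) (σ w)
          = ∑ i ∈ Finset.range p, (ρ (g ^ i) y₂ + x₂) := by
            refine Finset.sum_congr rfl fun i _ => ?_
            rw [← hv2, map_add, hXtriv (g ^ i) x₂ hx₂]
        _ = (∑ i ∈ Finset.range p, ρ (g ^ i) y₂) + (p : R) • x₂ := by
            rw [Finset.sum_add_distrib, Finset.sum_const, Finset.card_range,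
              ← Nat.cast_smul_eq_nsmul R]
    have hyY : (p : R) • y₁ + ∑ i ∈ Finset.range p, ρ (g ^ i) y₂ ∈ Y := by
      refine Submodule.add_mem _ (Submodule.smul_mem _ _ hy₁) ?_
      exact Submodule.sum_mem _ fun i _ =>
        hYinv (g ^ i) (Submodule.mem_map_of_mem hy₂)
    have hkey : x - ((p : R) • x₁ + (p : R) • x₂)
        = (p : R) • y₁ + ∑ i ∈ Finset.range p, ρ (g ^ i) y₂ := by
      rw [hx, hsum, ← hv1, smul_add]
      abel
    have hXmem : x - ((p : R) • x₁ + (p : R) • x₂) ∈ X :=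
      Submodule.sub_mem _ hxX
        (Submodule.add_mem _ (Submodule.smul_mem _ _ hx₁) (Submodule.smul_mem _ _ hx₂))
    have hzero : x - ((p : R) • x₁ + (p : R) • x₂) = 0 := by
      have : x - ((p : R) • x₁ + (p : R) • x₂) ∈ Y ⊓ X := ⟨hkey ▸ hyY, hXmem⟩
      simpa using hdisj.le_bot this
    have hxeq : x = (p : R) • (x₁ + x₂) := by
      rw [smul_add]; linear_combination (norm := module) hzero
    rw [hxeq]
    exact Submodule.smul_mem_pointwise_smul _ _ _ (Submodule.add_mem _ hx₁ hx₂)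
  · rintro z hz
    obtain ⟨x, hxX, rfl⟩ := Set.mem_smul_set.mp hz
    refine ⟨X.smul_mem _ hxX, ⟨x, ?_⟩⟩
    exact hσinv x (hXle hxX)
end

section
/- Let G be a cyclic group of order p², N its subgroup of order p, and U an RG-lattice such that: (1) U|_N is an RN-permutation module and U^N = Y ⊕ X as RG-modules with X a maximal trivial summand; (2) U_N and U_G are R-torsion-free. Then there is a decomposition of U restricted to N as U|_N = F ⊕ Z ⊕ X, where F is RN-free and Z ⊕ X is a maximal trivial RN-summand of U|_N. -/
open Pointwise

section Helpers

variable {R U : Type} [CommRing R] [AddCommGroup U] [Module R U]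

/-- Nakayama-style helper: a submodule all whose elements are `p` times another element
of the same submodule is trivial. -/
lemma nak_helper [IsDomain R] [IsLocalRing R] [IsNoetherianRing R]
    [Module.Finite R U] (p : ℕ) (hres : (p : R) ∈ IsLocalRing.maximalIdeal R)
    (S : Submodule R U) (h : ∀ x ∈ S, ∃ y ∈ S, x = (p : R) • y) : S = ⊥ := by
  haveI : IsNoetherian R U := isNoetherian_of_isNoetherianRing_of_finite R U
  have hS : S.FG := IsNoetherian.noetherian S
  have hle : S ≤ (IsLocalRing.maximalIdeal R) • S := by
    intro x hx
    obtain ⟨y, hy, rfl⟩ := h x hx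
    exact Submodule.smul_mem_smul hres hy
  have hjac : (IsLocalRing.maximalIdeal R) ≤ (⊥ : Ideal R).jacobson := by
    rw [IsLocalRing.jacobson_eq_maximalIdeal ⊥ bot_ne_top]
  exact Submodule.eq_bot_of_le_smul_of_le_jacobson_bot _ S hS hle hjac

/-- The key cohomological lemma (statement (★)):
if `a` is `G`-fixed and `p·a = ν(ν' u)`, then `a = ν' w` for some `τ`-fixed `w`. -/
lemma keyL2 (p : ℕ) (σe τe νe ν'e : U →ₗ[R] U)
    (hνfix : ∀ x, τe x = x → νe x = (p : R) • x)
    (hUNker : ∀ z, νe z = 0 → ∃ f, z = τe f - f)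
    (hUGker : ∀ z, νe (ν'e z) = 0 → ∃ v, z = σe v - v)
    (hgeom : ∀ x, ν'e (σe x - x) = τe x - x)
    (hcomm : ∀ x, ν'e (τe x) = τe (ν'e x))
    (hgeom2 : ∀ x, σe (ν'e x) - ν'e x = τe x - x)
    (a u : U) (haσ : σe a = a) (haτ : τe a = a)
    (heq : (p : R) • a = νe (ν'e u)) :
    ∃ w, τe w = w ∧ a = ν'e w := by
  have hb : νe (ν'e u - a) = 0 := by
    rw [map_sub, ← heq, hνfix a haτ, sub_self]
  obtain ⟨f, hf⟩ := hUNker _ hb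
  -- a = ν' (u - (σ f - f))
  have haw : a = ν'e (u - (σe f - f)) := by
    have : ν'e u - a = ν'e (σe f - f) := by rw [hgeom]; linear_combination (norm := module) hf
    rw [map_sub]; linear_combination (norm := module) -this
  set w := u - (σe f - f) with hwdef
  have hz : ν'e (τe w - w) = 0 := by
    rw [map_sub, hcomm, ← haw, haτ, sub_self]
  have hzG : νe (ν'e (τe w - w)) = 0 := by rw [hz, map_zero]
  obtain ⟨v, hv⟩ := hUGker _ hzG
  -- σ (ν'w - v) = ν'w - v
  have hσv : σe v - v = 0 := by
    have h1 : σe (ν'e w) - ν'e w = σe v - v := by rw [hgeom2, hv]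
    have h2 : σe (ν'e w) - ν'e w = 0 := by rw [← haw, haσ, sub_self]
    rw [← h1, h2]
  have hτw : τe w = w := by
    have := hv
    rw [hσv] at this
    exact sub_eq_zero.mp this
  exact ⟨w, hτw, haw⟩

/-- Splitting helper: a `p`-pure submodule of a f.g. submodule over a DVR is a direct summand. -/
lemma split_pure [IsDomain R] [IsDiscreteValuationRing R] [IsNoetherianRing R]
    [Module.Finite R U] (p : ℕ) (hp0 : (p : R) ≠ 0)
    (hres : (p : R) ∈ IsLocalRing.maximalIdeal R)
    (W T' : Submodule R U) (hWT : W ≤ T')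
    (hpur : ∀ t ∈ T', (p : R) • t ∈ W → t ∈ W) :
    ∃ Z : Submodule R U, Z ≤ T' ∧ W ⊓ Z = ⊥ ∧ W ⊔ Z = T' := by
  classical
  haveI : IsNoetherian R U := isNoetherian_of_isNoetherianRing_of_finite R U
  -- purity upgrades to all nonzero scalars
  obtain ⟨ϖ, hϖ⟩ := IsDiscreteValuationRing.exists_irreducible R
  have hϖmax : IsLocalRing.maximalIdeal R = Ideal.span {ϖ} :=
    (IsDiscreteValuationRing.irreducible_iff_uniformizer ϖ).mp hϖ
  have hp_span : (p : R) ∈ Ideal.span {ϖ} := hϖmax ▸ hres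
  obtain ⟨c, hc⟩ := Ideal.mem_span_singleton'.mp hp_span
  -- purity w.r.t. the uniformizer
  have hϖpur : ∀ t ∈ T', ϖ • t ∈ W → t ∈ W := by
    intro t ht hϖt
    have : (p : R) • t ∈ W := by
      rw [← hc, mul_smul] at *
      exact W.smul_mem c hϖt
    exact hpur t ht this
  -- purity w.r.t. powers of the uniformizer
  have hpowpur : ∀ (n : ℕ), ∀ t ∈ T', (ϖ ^ n) • t ∈ W → t ∈ W := by
    intro n
    induction n with
    | zero => intro t ht h; simpa using h
    | succ k ih =>
      intro t ht h
      have h1 : (ϖ ^ k) • (ϖ • t) ∈ W := by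
        rw [← mul_smul, ← pow_succ]; exact h
      exact hϖpur t ht (ih _ (T'.smul_mem ϖ ht) h1)
  -- purity w.r.t. all nonzero scalars
  have hrpur : ∀ (r : R), r ≠ 0 → ∀ t ∈ T', r • t ∈ W → t ∈ W := by
    intro r hr t ht hrt
    obtain ⟨n, u, rfl⟩ := IsDiscreteValuationRing.eq_unit_mul_pow_irreducible hr hϖ
    apply hpowpur n t ht
    have := W.smul_mem ((u⁻¹ : Rˣ) : R) hrt
    rwa [← mul_smul, ← mul_assoc, Units.inv_mul, one_mul] at this
  -- the quotient T'/W is finitely generated and torsion-free, hence free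
  set W' : Submodule R ↥T' := W.comap T'.subtype with hW'def
  haveI : Module.Finite R ↥T' := Module.Finite.iff_fg.mpr (IsNoetherian.noetherian T')
  haveI : Module.Finite R (↥T' ⧸ W') :=
    Module.Finite.of_surjective W'.mkQ (Submodule.mkQ_surjective W')
  haveI : NoZeroSMulDivisors R (↥T' ⧸ W') := by
    constructor
    intro r x hrx
    by_cases hr : r = 0
    · exact Or.inl hr
    · right
      obtain ⟨x', rfl⟩ := Submodule.mkQ_surjective W' x
      rw [← map_smul, Submodule.mkQ_apply, Submodule.Quotient.mk_eq_zero] at hrx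
      have hx' : (↑x' : U) ∈ W := by
        have h1 : (↑(r • x') : U) ∈ W := hrx
        have h2 : (↑(r • x') : U) = r • (↑x' : U) := rfl
        rw [h2] at h1
        exact hrpur r hr _ x'.2 h1
      rw [Submodule.mkQ_apply, Submodule.Quotient.mk_eq_zero]
      exact hx'
  haveI : Module.Projective R (↥T' ⧸ W') := Module.Projective.of_free
  obtain ⟨sec, hsec⟩ := Module.projective_lifting_property W'.mkQ LinearMap.id
    (Submodule.mkQ_surjective W')
  refine ⟨LinearMap.range (T'.subtype ∘ₗ sec), ?_, ?_, ?_⟩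
  · rintro x ⟨q, rfl⟩
    exact (sec q).2
  · rw [eq_bot_iff]
    rintro x ⟨hxW, ⟨q, rfl⟩⟩
    have hq : W'.mkQ (sec q) = q := by
      have := congrArg (fun f => f q) hsec
      simpa using this
    have hmem : sec q ∈ W' := hxW
    have : W'.mkQ (sec q) = 0 := (Submodule.Quotient.mk_eq_zero _).mpr hmem
    rw [hq] at this
    simp [this]
  · apply le_antisymm
    · exact sup_le hWT (by rintro x ⟨q, rfl⟩; exact (sec q).2)
    · intro t ht
      set tt : ↥T' := ⟨t, ht⟩ with htt
      have hdec : t = ((tt - sec (W'.mkQ tt) : ↥T') : U) + ((sec (W'.mkQ tt) : ↥T') : U) := by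
        simp [htt]
      rw [hdec]
      apply Submodule.add_mem_sup
      · have : W'.mkQ (tt - sec (W'.mkQ tt)) = 0 := by
          have hq : W'.mkQ (sec (W'.mkQ tt)) = W'.mkQ tt := by
            have := congrArg (fun f => f (W'.mkQ tt)) hsec
            simpa using this
          rw [map_sub, hq, sub_self]
        have hmem : tt - sec (W'.mkQ tt) ∈ W' := by
          rwa [Submodule.mkQ_apply, Submodule.Quotient.mk_eq_zero] at this
        exact hmem
      · exact ⟨W'.mkQ tt, rfl⟩


section BasisHelpers

variable {R U : Type} [CommRing R] [AddCommGroup U] [Module R U]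

/-- Coordinates of the image of `x` under a linear map permuting a basis. -/
lemma basis_perm_repr {κ : Type*} (b : Module.Basis κ R U) (f : U →ₗ[R] U) (e : Equiv.Perm κ)
    (h : ∀ k, f (b k) = b (e k)) (x : U) (k : κ) :
    b.repr (f x) k = b.repr x (e.symm k) := by
  classical
  have : (Finsupp.lapply k : (κ →₀ R) →ₗ[R] R).comp (b.repr.toLinearMap.comp f)
      = (Finsupp.lapply (e.symm k) : (κ →₀ R) →ₗ[R] R).comp b.repr.toLinearMap := by
    apply b.ext
    intro i
    simp only [LinearMap.comp_apply, LinearEquiv.coe_coe, Finsupp.lapply_apply, h i,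
      Module.Basis.repr_self]
    rw [Finsupp.single_apply, Finsupp.single_apply]
    by_cases hik : e i = k
    · rw [if_pos hik, if_pos (by rw [← hik, Equiv.symm_apply_apply])]
    · rw [if_neg hik, if_neg (by intro hc; exact hik (by rw [hc, Equiv.apply_symm_apply]))]
  exact congrArg (fun (g : U →ₗ[R] R) => g x) this

/-- Membership in the span of the left part of a basis indexed by a sum type. -/
lemma mem_span_inl_iff [Nontrivial R] {κ lam : Type*} (b : Module.Basis (κ ⊕ lam) R U)
    [Fintype κ] [Fintype lam] (x : U) :
    x ∈ Submodule.span R (Set.range fun k : κ => b (Sum.inl k)) ↔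
      ∀ j : lam, b.repr x (Sum.inr j) = 0 := by
  classical
  constructor
  · intro hx j
    induction hx using Submodule.span_induction with
    | mem y hy =>
      obtain ⟨k, rfl⟩ := hy
      simp [Module.Basis.repr_self, Finsupp.single_apply]
    | zero => simp
    | add y z _ _ hy hz => simp [hy, hz]
    | smul r y _ hy => simp [hy]
  · intro hx
    have hrep := b.sum_repr x
    rw [Fintype.sum_sum_type] at hrep
    have h2 : (∑ j : lam, b.repr x (Sum.inr j) • b (Sum.inr j)) = 0 := by
      apply Finset.sum_eq_zero
      intro j _
      rw [hx j, zero_smul]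
    rw [h2, add_zero] at hrep
    rw [← hrep]
    exact Submodule.sum_mem _ fun k _ => Submodule.smul_mem _ _
      (Submodule.subset_span ⟨k, rfl⟩)

/-- The two parts of a basis indexed by a sum type give complementary submodules. -/
lemma isCompl_span_sum [Nontrivial R] {κ lam : Type*} (b : Module.Basis (κ ⊕ lam) R U)
    [Fintype κ] [Fintype lam] :
    IsCompl (Submodule.span R (Set.range fun k : κ => b (Sum.inl k)))
      (Submodule.span R (Set.range fun j : lam => b (Sum.inr j))) := by
  classical
  have hinr : ∀ (y : U), y ∈ Submodule.span R (Set.range fun j : lam => b (Sum.inr j)) →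
      ∀ k : κ, b.repr y (Sum.inl k) = 0 := by
    intro y hy k
    set b2 := b.reindex (Equiv.sumComm κ lam) with hb2
    have h1 : y ∈ Submodule.span R (Set.range fun j : lam => b2 (Sum.inl j)) := by
      have : (fun j : lam => b2 (Sum.inl j)) = fun j : lam => b (Sum.inr j) := by
        funext j; simp [hb2]
      rw [this]; exact hy
    have h2 := (mem_span_inl_iff b2 y).mp h1 k
    rwa [hb2, Module.Basis.repr_reindex_apply] at h2
  constructor
  · rw [disjoint_iff, eq_bot_iff]
    intro x hx
    have h1 := (mem_span_inl_iff b x).mp hx.1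
    have h2 := hinr x hx.2
    have : x = 0 := by
      have hrep := b.sum_repr x
      rw [Fintype.sum_sum_type] at hrep
      rw [← hrep]
      rw [Finset.sum_eq_zero (fun k _ => by rw [h2 k, zero_smul]),
        Finset.sum_eq_zero (fun j _ => by rw [h1 j, zero_smul]), add_zero]
    simp [this]
  · rw [codisjoint_iff, eq_top_iff]
    intro x _
    have hrep := b.sum_repr x
    rw [Fintype.sum_sum_type] at hrep
    rw [← hrep]
    apply Submodule.add_mem_sup
    · exact Submodule.sum_mem _ fun k _ => Submodule.smul_mem _ _
        (Submodule.subset_span ⟨k, rfl⟩)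
    · exact Submodule.sum_mem _ fun j _ => Submodule.smul_mem _ _
        (Submodule.subset_span ⟨j, rfl⟩)

end BasisHelpers

end Helpers


/-- Let `G` be cyclic of order `p²`, `N` its subgroup of order `p`, and `U` an
`RG`-lattice such that (1) `U|_N` is an `RN`-permutation module and `U^N = Y ⊕ X` as
`RG`-modules with `X` a maximal trivial summand, and (2) `U_N` and `U_G` are `R`-torsion-free.
Then there is a decomposition `U|_N = F ⊕ Z ⊕ X` where `F` is `RN`-free and `Z ⊕ X` is a
maximal trivial `RN`-summand of `U|_N`. -/
theorem stmt_9 (p : ℕ) (hp : p.Prime) (R G U : Type) [CommRing R] [IsDomain R]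
    [IsDiscreteValuationRing R] [IsAdicComplete (IsLocalRing.maximalIdeal R) R] [CharZero R]
    (hres : (p : R) ∈ IsLocalRing.maximalIdeal R)
    [Group G] [Fintype G] (hcyc : IsCyclic G) (hcard : Fintype.card G = p ^ 2)
    (N : Subgroup G) [Fintype ↥N] (hN : Fintype.card ↥N = p)
    [AddCommGroup U] [Module R U] [Module.Finite R U] [Module.Free R U]
    (ρ : Representation R G U)
    -- (1) U restricted to N is an RN-permutation module
    (hperm : ∃ (ι : Type) (b : Module.Basis ι R U), ∀ n ∈ N, ∀ i : ι, ∃ j, ρ n (b i) = b j)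
    -- and U^N = Y ⊕ X as RG-modules with X a maximal trivial summand
    (X Y : Submodule R U)
    (hsup : Y ⊔ X = Representation.invariants (ρ.comp N.subtype))
    (hdisj : Disjoint Y X)
    (hXinv : ∀ g : G, X.map (ρ g) ≤ X) (hYinv : ∀ g : G, Y.map (ρ g) ≤ Y)
    (hXtriv : ∀ (g : G), ∀ x ∈ X, ρ g x = x)
    (hmax : ∀ W W' : Submodule R U, W ⊔ W' = Y → Disjoint W W' →
      (∀ g : G, W.map (ρ g) ≤ W) → (∀ g : G, W'.map (ρ g) ≤ W') →
      (∀ (g : G), ∀ w ∈ W, ρ g w = w) → W = ⊥)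
    -- (2) U_N and U_G are R-torsion-free
    (hUN : NoZeroSMulDivisors R (U ⧸ augSub ρ N))
    (hUG : NoZeroSMulDivisors R (U ⧸ augSub ρ (⊤ : Subgroup G))) :
    ∃ F Z : Submodule R U,
      -- U|_N = F ⊕ Z ⊕ X
      F ⊔ Z ⊔ X = ⊤ ∧ Disjoint F (Z ⊔ X) ∧ Disjoint Z X ∧
      (∀ n ∈ N, F.map (ρ n) ≤ F) ∧
      -- N acts trivially on Z (and on X, by hypothesis)
      (∀ n ∈ N, ∀ z ∈ Z, ρ n z = z) ∧
      -- F is RN-free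
      (∃ (ι : Type) (b : Module.Basis (ι × ↥N) R ↥F), ∀ (n : ↥N) (i : ι) (m : ↥N),
        ρ (↑n : G) (↑(b (i, m)) : U) = (↑(b (i, n * m)) : U)) ∧
      -- Z ⊕ X is a maximal trivial RN-summand: F has no nonzero trivial RN-summand
      (∀ W W' : Submodule R U, W ⊔ W' = F → Disjoint W W' →
        (∀ n ∈ N, W.map (ρ n) ≤ W) → (∀ n ∈ N, W'.map (ρ n) ≤ W') →
        (∀ n ∈ N, ∀ w ∈ W, ρ n w = w) → W = ⊥) := by
  classical
  obtain ⟨ι, b, hb⟩ := hperm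
  haveI : Finite ι := Module.Finite.finite_basis b
  haveI : Fintype ι := Fintype.ofFinite ι
  obtain ⟨g, hg⟩ := hcyc.exists_generator
  have hp0 : 0 < p := hp.pos
  have hpR : (p : R) ≠ 0 := Nat.cast_ne_zero.mpr hp.ne_zero
  have horder : orderOf g = p ^ 2 := by
    rw [orderOf_eq_card_of_forall_mem_zpowers hg, Nat.card_eq_fintype_card, hcard]
  -- N is generated by g^p
  have hordgp : orderOf (g ^ p) = p := by
    rw [orderOf_pow, horder, Nat.gcd_eq_right (dvd_pow_self p two_ne_zero), pow_two,
      Nat.mul_div_cancel _ hp0]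
  have hNz : N = Subgroup.zpowers (g ^ p) := by
    have hle : N ≤ Subgroup.zpowers (g ^ p) := by
      intro x hx
      have hxp : x ^ p = 1 := by
        have h1 : (⟨x, hx⟩ : ↥N) ^ (Fintype.card ↥N) = 1 := pow_card_eq_one
        rw [hN] at h1
        have h2 := congrArg (Subgroup.subtype N) h1
        simpa using h2
      obtain ⟨kz, hkz⟩ := Subgroup.mem_zpowers_iff.mp (hg x)
      have h1 : g ^ (kz * (p : ℤ)) = 1 := by
        rw [zpow_mul, hkz, zpow_natCast, hxp]
      have hdvd : ((p ^ 2 : ℕ) : ℤ) ∣ kz * p := by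
        rw [← horder]
        exact_mod_cast orderOf_dvd_iff_zpow_eq_one.mpr h1
      have hpd : (p : ℤ) ∣ kz := by
        have hpz : (p : ℤ) ≠ 0 := by exact_mod_cast hp.ne_zero
        have h2 : ((p : ℤ)) * p ∣ kz * p := by
          have h3 : ((p ^ 2 : ℕ) : ℤ) = (p : ℤ) * p := by push_cast; ring
          rwa [h3] at hdvd
        rw [mul_comm (p : ℤ) p] at h2
        exact (mul_dvd_mul_iff_right hpz).mp
          (by simpa [mul_comm] using h2)
      obtain ⟨k', rfl⟩ := hpd
      refine Subgroup.mem_zpowers_iff.mpr ⟨k', ?_⟩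
      rw [← zpow_natCast g p, ← zpow_mul]
      exact hkz
    apply (Subgroup.eq_of_le_of_card_ge hle ?_)
    rw [Nat.card_zpowers, hordgp, Nat.card_eq_fintype_card, hN]
  have hgpN : g ^ p ∈ N := hNz ▸ Subgroup.mem_zpowers _
  -- the key linear operators
  set σe : U →ₗ[R] U := ρ g with hσedef
  set τe : U →ₗ[R] U := ρ (g ^ p) with hτedef
  have hτσp : τe = σe ^ p := by rw [hσedef, hτedef, map_pow]
  set ν'e : U →ₗ[R] U := ∑ i ∈ Finset.range p, σe ^ i with hν'def
  set νe : U →ₗ[R] U := ∑ n : ↥N, ρ (↑n : G) with hνdef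
  have hmemN : ∀ n : G, n ∈ N → ∃ k : ℕ, (g ^ p) ^ k = n := by
    intro n hn
    rw [hNz] at hn
    exact mem_powers_iff_mem_zpowers.mpr hn
  have hmemG : ∀ h : G, ∃ k : ℕ, g ^ k = h := fun h =>
    mem_powers_iff_mem_zpowers.mpr (hg h)
  have hpowfix : ∀ (f : Module.End R U) (x : U), f x = x → ∀ k : ℕ, (f ^ k) x = x := by
    intro f x hfx k
    induction k with
    | zero => simp
    | succ k ih => rw [pow_succ, Module.End.mul_apply, hfx, ih]
  have hfixN_of_τ : ∀ x : U, τe x = x → ∀ n : ↥N, ρ (↑n : G) x = x := by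
    intro x hx n
    obtain ⟨k, hk⟩ := hmemN ↑n n.2
    rw [← hk, map_pow]
    exact hpowfix _ x hx k
  have hτfix_of_σ : ∀ x : U, σe x = x → τe x = x := by
    intro x hx; rw [hτσp]; exact hpowfix σe x hx p
  have hMinv_iff : ∀ x : U, x ∈ Representation.invariants (ρ.comp N.subtype) ↔ τe x = x := by
    intro x
    rw [Representation.mem_invariants]
    constructor
    · intro h; exact h ⟨g ^ p, hgpN⟩
    · intro h n; exact hfixN_of_τ x h n
  have hνapp : ∀ x : U, νe x = ∑ n : ↥N, ρ (↑n : G) x := by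
    intro x; rw [hνdef, LinearMap.sum_apply]
  have hν'app : ∀ x : U, ν'e x = ∑ i ∈ Finset.range p, (σe ^ i) x := by
    intro x; rw [hν'def, LinearMap.sum_apply]
  have hνfix' : ∀ x : U, (∀ n : ↥N, ρ (↑n : G) x = x) → νe x = (p : R) • x := by
    intro x hx
    rw [hνapp, Finset.sum_congr rfl (fun n _ => hx n), Finset.sum_const, Finset.card_univ,
      hN, Nat.cast_smul_eq_nsmul]
  have hνfix : ∀ x : U, τe x = x → νe x = (p : R) • x := fun x hx =>
    hνfix' x (hfixN_of_τ x hx)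
  have hν'fixσ : ∀ x : U, σe x = x → ν'e x = (p : R) • x := by
    intro x hx
    rw [hν'app, Finset.sum_congr rfl (fun i _ => hpowfix σe x hx i), Finset.sum_const,
      Finset.card_range, Nat.cast_smul_eq_nsmul]
  have hgeom : ∀ x : U, ν'e (σe x - x) = τe x - x := by
    intro x
    have h2 := congrArg (fun (f : Module.End R U) => f x) (geom_sum_mul σe p)
    simp only [Module.End.mul_apply, LinearMap.sub_apply, Module.End.one_apply] at h2
    rw [hν'def, hτσp]
    exact h2
  have hgeom2 : ∀ x : U, σe (ν'e x) - ν'e x = τe x - x := by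
    intro x
    have h2 := congrArg (fun (f : Module.End R U) => f x) (mul_geom_sum σe p)
    simp only [Module.End.mul_apply, LinearMap.sub_apply, Module.End.one_apply] at h2
    rw [hν'def, hτσp]
    exact h2
  have hcommτν' : ∀ x : U, ν'e (τe x) = τe (ν'e x) := by
    intro x
    have h : ν'e * τe = τe * ν'e := by
      rw [hν'def, hτσp, Finset.sum_mul, Finset.mul_sum]
      exact Finset.sum_congr rfl fun i _ => pow_mul_comm σe i p
    have h2 := congrArg (fun (f : Module.End R U) => f x) h
    simpa only [Module.End.mul_apply] using h2
  have hcommg : ∀ n : G, n ∈ N → g * n = n * g := by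
    intro n hn
    obtain ⟨k, hk⟩ := hmemN n hn
    rw [← hk, ← pow_mul]
    exact ((Commute.refl g).pow_right (p * k)).eq
  have hσρn : ∀ (n : ↥N) (x : U), σe (ρ (↑n : G) x) = ρ (↑n : G) (σe x) := by
    intro n x
    have h1 : σe (ρ (↑n : G) x) = ρ (g * ↑n) x := by
      rw [map_mul]; rfl
    have h2 : ρ (↑n : G) (σe x) = ρ ((↑n : G) * g) x := by
      rw [map_mul]; rfl
    rw [h1, h2, hcommg ↑n n.2]
  have hσν : ∀ x : U, σe (νe x) = νe (σe x) := by
    intro x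
    rw [hνapp, map_sum, hνapp]
    exact Finset.sum_congr rfl fun n _ => hσρn n x
  have hσkν : ∀ (k : ℕ) (x : U), (σe ^ k) (νe x) = νe ((σe ^ k) x) := by
    intro k
    induction k with
    | zero => intro x; simp
    | succ k ih =>
      intro x
      rw [pow_succ, Module.End.mul_apply, Module.End.mul_apply, hσν, ih]
  have hνν'comm : ∀ x : U, ν'e (νe x) = νe (ν'e x) := by
    intro x
    rw [hν'app, hν'app (x := x), map_sum]
    exact Finset.sum_congr rfl fun i _ => hσkν i x
  have hν'σcomm : ∀ x : U, σe (ν'e x) = ν'e (σe x) := by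
    intro x
    rw [hν'app, map_sum, hν'app]
    refine Finset.sum_congr rfl fun i _ => ?_
    have h1 : σe ((σe ^ i) x) = (σe ^ (i + 1)) x := by
      rw [pow_succ']; rfl
    have h2 : (σe ^ i) (σe x) = (σe ^ (i + 1)) x := by
      rw [pow_succ]; rfl
    rw [h1, h2]
  have hτνapp : ∀ x : U, νe (τe x) = νe x := by
    intro x
    rw [hνapp, hνapp]
    apply Fintype.sum_equiv (Equiv.mulRight (⟨g ^ p, hgpN⟩ : ↥N))
    intro n
    have h1 : ρ (↑n : G) (τe x) = ρ ((↑n : G) * g ^ p) x := by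
      rw [map_mul]; rfl
    rw [h1]
    rfl
  have hνGr : ∀ x : U, νe (ν'e (σe x)) = νe (ν'e x) := by
    intro x
    have h1 : νe (ν'e (σe x)) - νe (ν'e x) = νe (τe x) - νe x := by
      rw [← map_sub, ← map_sub, ← map_sub, hgeom, map_sub]
    have h2 : νe (τe x) - νe x = 0 := by rw [hτνapp, sub_self]
    rw [h2] at h1
    exact sub_eq_zero.mp h1
  have hνGl : ∀ x : U, σe (νe (ν'e x)) = νe (ν'e x) := by
    intro x
    rw [hσν, hν'σcomm, hνGr]
  -- kernels via torsion-freeness of coinvariants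
  have haugN : augSub ρ N ≤ LinearMap.range (τe - 1) := by
    rw [augSub]
    apply Submodule.span_le.mpr
    rintro x ⟨n, hn, u, rfl⟩
    obtain ⟨k, hk⟩ := hmemN n hn
    refine ⟨(∑ j ∈ Finset.range k, τe ^ j) u, ?_⟩
    have h2 := congrArg (fun (f : Module.End R U) => f u) (mul_geom_sum τe k)
    simp only [Module.End.mul_apply, LinearMap.sub_apply, Module.End.one_apply] at h2
    have h3 : (τe - 1) ((∑ j ∈ Finset.range k, τe ^ j) u) = (τe ^ k) u - u := by
      rw [← h2]; rfl
    rw [h3, ← hk, map_pow]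
  have haugG : augSub ρ (⊤ : Subgroup G) ≤ LinearMap.range (σe - 1) := by
    rw [augSub]
    apply Submodule.span_le.mpr
    rintro x ⟨n, _, u, rfl⟩
    obtain ⟨k, hk⟩ := hmemG n
    refine ⟨(∑ j ∈ Finset.range k, σe ^ j) u, ?_⟩
    have h2 := congrArg (fun (f : Module.End R U) => f u) (mul_geom_sum σe k)
    simp only [Module.End.mul_apply, LinearMap.sub_apply, Module.End.one_apply] at h2
    have h3 : (σe - 1) ((∑ j ∈ Finset.range k, σe ^ j) u) = (σe ^ k) u - u := by
      rw [← h2]; rfl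
    rw [h3, ← hk, map_pow]
  have hkerν : ∀ z : U, νe z = 0 → ∃ f : U, z = τe f - f := by
    intro z hz
    have hmemaug : (p : R) • z ∈ augSub ρ N := by
      have h1 : νe z - (p : R) • z ∈ augSub ρ N := by
        have h2 : νe z - (p : R) • z = ∑ n : ↥N, (ρ (↑n : G) z - z) := by
          rw [Finset.sum_sub_distrib, ← hνapp, Finset.sum_const, Finset.card_univ, hN,
            Nat.cast_smul_eq_nsmul]
        rw [h2]
        exact Submodule.sum_mem _ fun n _ =>
          Submodule.subset_span ⟨↑n, n.2, z, rfl⟩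
      rw [hz, zero_sub] at h1
      simpa using (augSub ρ N).neg_mem h1
    have hz' : z ∈ augSub ρ N := by
      have h1 : (p : R) • ((augSub ρ N).mkQ z) = 0 := by
        rw [← map_smul, Submodule.mkQ_apply, Submodule.Quotient.mk_eq_zero]
        exact hmemaug
      rcases smul_eq_zero.mp h1 with h | h
      · exact absurd h hpR
      · rwa [Submodule.mkQ_apply, Submodule.Quotient.mk_eq_zero] at h
    obtain ⟨f, hf⟩ := haugN hz'
    exact ⟨f, by rw [← hf]; rfl⟩
  have hkerνG : ∀ z : U, νe (ν'e z) = 0 → ∃ v : U, z = σe v - v := by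
    intro z hz
    have hmemaug : ((p : R) * p) • z ∈ augSub ρ (⊤ : Subgroup G) := by
      have h1 : νe (ν'e z) - ((p : R) * p) • z ∈ augSub ρ (⊤ : Subgroup G) := by
        have h2 : νe (ν'e z) = ∑ n : ↥N, ∑ i ∈ Finset.range p, ρ ((↑n : G) * g ^ i) z := by
          rw [hνapp]
          refine Finset.sum_congr rfl fun n _ => ?_
          rw [hν'app, map_sum]
          refine Finset.sum_congr rfl fun i _ => ?_
          rw [map_mul]
          have : (σe ^ i) z = ρ (g ^ i) z := by rw [map_pow]
          rw [this]; rfl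
        have h3 : ((p : R) * p) • z = ∑ _n : ↥N, ∑ _i ∈ Finset.range p, z := by
          have h4 : (∑ _n : ↥N, ∑ _i ∈ Finset.range p, z) = p • p • z := by
            simp [Finset.sum_const, Finset.card_range, Finset.card_univ, hN]
          rw [h4, mul_smul, Nat.cast_smul_eq_nsmul, Nat.cast_smul_eq_nsmul]
        rw [h2, h3, ← Finset.sum_sub_distrib]
        refine Submodule.sum_mem _ fun n _ => ?_
        rw [← Finset.sum_sub_distrib]
        exact Submodule.sum_mem _ fun i _ =>
          Submodule.subset_span ⟨(↑n : G) * g ^ i, trivial, z, rfl⟩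
      rw [hz, zero_sub] at h1
      simpa using (augSub ρ (⊤ : Subgroup G)).neg_mem h1
    have hz' : z ∈ augSub ρ (⊤ : Subgroup G) := by
      have h1 : ((p : R) * p) • ((augSub ρ (⊤ : Subgroup G)).mkQ z) = 0 := by
        rw [← map_smul, Submodule.mkQ_apply, Submodule.Quotient.mk_eq_zero]
        exact hmemaug
      rcases smul_eq_zero.mp h1 with h | h
      · exact absurd h (mul_ne_zero hpR hpR)
      · rwa [Submodule.mkQ_apply, Submodule.Quotient.mk_eq_zero] at h
    obtain ⟨v, hv⟩ := haugG hz'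
    exact ⟨v, by rw [← hv]; rfl⟩
  -- facts about X and Y
  have hXMinv : X ≤ Representation.invariants (ρ.comp N.subtype) :=
    le_of_le_of_eq le_sup_right hsup
  have hYMinv : Y ≤ Representation.invariants (ρ.comp N.subtype) :=
    le_of_le_of_eq le_sup_left hsup
  have hXτ : ∀ x ∈ X, τe x = x := fun x hx => (hMinv_iff x).mp (hXMinv hx)
  have hXσ : ∀ x ∈ X, σe x = x := fun x hx => hXtriv g x hx
  have hYσk : ∀ (k : ℕ), ∀ y ∈ Y, (σe ^ k) y ∈ Y := by
    intro k
    induction k with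
    | zero => intro y hy; simpa using hy
    | succ k ih =>
      intro y hy
      rw [pow_succ, Module.End.mul_apply]
      exact ih _ (hYinv g ⟨y, hy, rfl⟩)
  have hYν' : ∀ y ∈ Y, ν'e y ∈ Y := by
    intro y hy
    rw [hν'app]
    exact Submodule.sum_mem _ fun i _ => hYσk i y hy
  have hYX0 : ∀ u : U, u ∈ Y → u ∈ X → u = 0 :=
    fun u hy hx => Submodule.disjoint_def.mp hdisj u hy hx
  have hdecomp : ∀ m : U, τe m = m → ∃ y ∈ Y, ∃ x ∈ X, y + x = m := by
    intro m hm
    have hmem : m ∈ Y ⊔ X := by rw [hsup]; exact (hMinv_iff m).mpr hm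
    exact Submodule.mem_sup.mp hmem
  have hU0 : ∀ (r : R) (x : U), r • x = 0 → r = 0 ∨ x = 0 := by
    intro r x h
    by_cases hr : r = 0
    · exact Or.inl hr
    · right
      have h1 : b.repr (r • x) = 0 := by rw [h, map_zero]
      rw [map_smul] at h1
      have h2 : b.repr x = 0 := by
        ext i
        have h3 := DFunLike.congr_fun h1 i
        rw [Finsupp.smul_apply, smul_eq_mul] at h3
        rcases mul_eq_zero.mp h3 with h4 | h4
        · exact absurd h4 hr
        · simpa using h4
      have := b.repr.map_eq_zero_iff.mp h2
      exact this
  have hL2 := keyL2 (R := R) (U := U) p σe τe νe ν'e hνfix hkerν hkerνG hgeom hcommτν' hgeom2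
  -- the action of N on the basis index set
  have hbinj : Function.Injective b := b.injective
  have hactex : ∀ (n : ↥N) (i : ι), ∃ j, ρ (↑n : G) (b i) = b j := fun n i => hb ↑n n.2 i
  choose act hactspec using hactex
  have hact_one : ∀ i, act 1 i = i := by
    intro i
    apply hbinj
    rw [← hactspec]
    simp
  have hact_mul : ∀ (n m : ↥N) (i : ι), act (n * m) i = act n (act m i) := by
    intro n m i
    apply hbinj
    rw [← hactspec, ← hactspec, ← hactspec, Subgroup.coe_mul, map_mul]
    rfl
  set P : ι → Prop := fun i => ∀ n : ↥N, act n i = i with hPdef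
  have hactinv : ∀ (n : ↥N) (i : ι), act n⁻¹ (act n i) = i := by
    intro n i; rw [← hact_mul, inv_mul_cancel, hact_one]
  set gp' : ↥N := ⟨g ^ p, hgpN⟩ with hgp'def
  have hNpow : ∀ a : ↥N, ∃ k : ℕ, gp' ^ k = a := by
    intro a
    obtain ⟨k, hk⟩ := hmemN ↑a a.2
    exact ⟨k, Subtype.ext (by rw [SubmonoidClass.coe_pow]; exact hk)⟩
  have hNcomm : ∀ a c : ↥N, a * c = c * a := by
    intro a c
    obtain ⟨k, rfl⟩ := hNpow a
    obtain ⟨l, rfl⟩ := hNpow c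
    exact pow_mul_comm gp' k l
  have hstab : ∀ (i : ι), ¬ P i → ∀ n : ↥N, act n i = i → n = 1 := by
    intro i hPi n hn
    by_contra hne
    apply hPi
    intro m
    have hcard' : Nat.card ↥N = p := by rw [Nat.card_eq_fintype_card, hN]
    have hordn : orderOf n = p := by
      have hdvd : orderOf n ∣ p := by rw [← hN]; exact orderOf_dvd_card
      rcases (Nat.dvd_prime hp).mp hdvd with h | h
      · exact absurd (orderOf_eq_one_iff.mp h) hne
      · exact h
    have htop : Subgroup.zpowers n = (⊤ : Subgroup ↥N) := by
      apply Subgroup.eq_top_of_card_eq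
      rw [Nat.card_zpowers, hordn, hcard']
    have hmem : m ∈ Subgroup.zpowers n := htop ▸ Subgroup.mem_top m
    obtain ⟨k, hk⟩ := mem_powers_iff_mem_zpowers.mpr hmem
    rw [← hk]
    clear hk
    show act (n ^ k) i = i
    induction k with
    | zero => simpa using hact_one i
    | succ k ih => rw [pow_succ, hact_mul, hn]; exact ih
  have hactnP : ∀ (n : ↥N) (i : ι), ¬ P i → ¬ P (act n i) := by
    intro n i hPi hP2
    apply hPi
    intro m
    have h1 : act n (act m i) = act n i := by
      rw [← hact_mul, hNcomm n m, hact_mul, hP2 m]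
    have h2 := congrArg (act n⁻¹) h1
    rwa [hactinv, hactinv] at h2
  -- the orbit space of non-fixed indices
  have hsd_symm : ∀ {x y : {i : ι // ¬ P i}}, (∃ n : ↥N, act n ↑y = ↑x) →
      (∃ n : ↥N, act n ↑x = ↑y) := by
    rintro x y ⟨n, hn⟩
    exact ⟨n⁻¹, by rw [← hn, hactinv]⟩
  have hsd_trans : ∀ {x y z : {i : ι // ¬ P i}}, (∃ n : ↥N, act n ↑y = ↑x) →
      (∃ n : ↥N, act n ↑z = ↑y) → ∃ n : ↥N, act n ↑z = ↑x := by
    rintro x y z ⟨n, hn⟩ ⟨m, hm⟩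
    exact ⟨n * m, by rw [hact_mul, hm, hn]⟩
  let sd : Setoid {i : ι // ¬ P i} := ⟨fun x y => ∃ n : ↥N, act n ↑y = ↑x,
    fun x => ⟨1, hact_one ↑x⟩, hsd_symm, hsd_trans⟩
  haveI : Finite {i : ι // ¬ P i} := Subtype.finite
  haveI : Finite (Quotient sd) := Quotient.finite sd
  haveI : Fintype (Quotient sd) := Fintype.ofFinite (Quotient sd)
  haveI : Fintype {i : ι // P i} := Fintype.ofFinite {i : ι // P i}
  -- the bijection between (orbits × N) ⊕ fixed indices and all indices
  set ef : ((Quotient sd × ↥N) ⊕ {i : ι // P i}) → ι :=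
    Sum.elim (fun z => act z.2 ↑(Quotient.out z.1)) (fun j => ↑j) with hefdef
  have hef_bij : Function.Bijective ef := by
    constructor
    · rintro (⟨q, n⟩ | j) (⟨q', n'⟩ | j') h
      · simp only [hefdef, Sum.elim_inl] at h
        have hq : q = q' := by
          have hrel : Quotient.mk sd (Quotient.out q) = Quotient.mk sd (Quotient.out q') := by
            apply Quotient.sound
            refine ⟨n⁻¹ * n', ?_⟩
            rw [hact_mul, ← h, hactinv]
          rwa [Quotient.out_eq, Quotient.out_eq] at hrel
        subst hq
        have hn : n = n' := by
          have h1 : act (n'⁻¹ * n) ↑(Quotient.out q) = ↑(Quotient.out q) := by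
            rw [hact_mul, h, hactinv]
          have h2 := hstab _ (Quotient.out q).2 _ h1
          exact (inv_mul_eq_one.mp h2).symm
        rw [hn]
      · exfalso
        simp only [hefdef, Sum.elim_inl, Sum.elim_inr] at h
        have h1 : ¬ P (act n ↑(Quotient.out q)) := hactnP n _ (Quotient.out q).2
        rw [h] at h1
        exact h1 j'.2
      · exfalso
        simp only [hefdef, Sum.elim_inl, Sum.elim_inr] at h
        have h1 : ¬ P (act n' ↑(Quotient.out q')) := hactnP n' _ (Quotient.out q').2
        rw [← h] at h1
        exact h1 j.2
      · simp only [hefdef, Sum.elim_inr] at h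
        exact congrArg Sum.inr (Subtype.ext h)
    · intro i
      by_cases hPi : P i
      · exact ⟨Sum.inr ⟨i, hPi⟩, rfl⟩
      · set x : {i : ι // ¬ P i} := ⟨i, hPi⟩ with hxdef
        set q := Quotient.mk sd x with hqdef
        have hrel : Quotient.mk sd (Quotient.out q) = Quotient.mk sd x := by
          rw [Quotient.out_eq]
        obtain ⟨n, hn⟩ := hsd_symm (Quotient.exact hrel)
        refine ⟨Sum.inl (q, n), ?_⟩
        simp only [hefdef, Sum.elim_inl]
        exact hn
  set e : ((Quotient sd × ↥N) ⊕ {i : ι // P i}) ≃ ι := Equiv.ofBijective ef hef_bij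
    with hedef
  set b' : Module.Basis ((Quotient sd × ↥N) ⊕ {i : ι // P i}) R U := b.reindex e.symm with hb'def
  have hb'_apply : ∀ z, b' z = b (ef z) := by
    intro z
    rw [hb'def, Module.Basis.reindex_apply, Equiv.symm_symm]
    rfl
  have hb'_inl : ∀ (q : Quotient sd) (n : ↥N),
      b' (Sum.inl (q, n)) = b (act n ↑(Quotient.out q)) := by
    intro q n; rw [hb'_apply]; rfl
  have hb'_inr : ∀ j : {i : ι // P i}, b' (Sum.inr j) = b ↑j := by
    intro j; rw [hb'_apply]; rfl
  have hρb'_inl : ∀ (n : ↥N) (q : Quotient sd) (m : ↥N),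
      ρ (↑n : G) (b' (Sum.inl (q, m))) = b' (Sum.inl (q, n * m)) := by
    intro n q m
    rw [hb'_inl, hb'_inl, hactspec, ← hact_mul]
  have hρb'_inr : ∀ (n : ↥N) (j : {i : ι // P i}),
      ρ (↑n : G) (b' (Sum.inr j)) = b' (Sum.inr j) := by
    intro n j
    rw [hb'_inr, hactspec, j.2 n]
  -- the free part and the trivial part
  set FF : Submodule R U := Submodule.span R
    (Set.range fun z : Quotient sd × ↥N => b' (Sum.inl z)) with hFFdef
  set TT : Submodule R U := Submodule.span R
    (Set.range fun j : {i : ι // P i} => b' (Sum.inr j)) with hTTdef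
  have hcompl : IsCompl FF TT := isCompl_span_sum b'
  have hmemFF : ∀ x : U, x ∈ FF ↔ ∀ j, b'.repr x (Sum.inr j) = 0 :=
    fun x => mem_span_inl_iff b' x
  have hFFpure : ∀ x : U, (p : R) • x ∈ FF → x ∈ FF := by
    intro x hx
    rw [hmemFF] at hx ⊢
    intro j
    have h1 := hx j
    rw [map_smul, Finsupp.smul_apply, smul_eq_mul] at h1
    rcases mul_eq_zero.mp h1 with h | h
    · exact absurd h hpR
    · exact h
  have hTfix : ∀ t ∈ TT, ∀ n : ↥N, ρ (↑n : G) t = t := by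
    intro t ht
    induction ht using Submodule.span_induction with
    | mem y hy =>
      obtain ⟨j, rfl⟩ := hy
      intro n
      exact hρb'_inr n j
    | zero => intro n; simp
    | add y z _ _ hy hz => intro n; rw [map_add, hy n, hz n]
    | smul r y _ hy => intro n; rw [map_smul, hy n]
  have hTτ : ∀ t ∈ TT, τe t = t := by
    intro t ht
    exact hTfix t ht gp'
  have hFFstable : ∀ n : ↥N, ∀ f ∈ FF, ρ (↑n : G) f ∈ FF := by
    intro n f hf
    induction hf using Submodule.span_induction with
    | mem y hy =>
      obtain ⟨⟨q, m⟩, rfl⟩ := hy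
      rw [hρb'_inl]
      exact Submodule.subset_span ⟨(q, n * m), rfl⟩
    | zero => simp
    | add y z _ _ hy hz => rw [map_add]; exact FF.add_mem hy hz
    | smul r y _ hy => rw [map_smul]; exact FF.smul_mem r hy
  -- coordinates of invariant elements are constant along orbits
  have hconst_repr : ∀ x : U, (∀ n : ↥N, ρ (↑n : G) x = x) →
      ∀ (q : Quotient sd) (m : ↥N),
        b'.repr x (Sum.inl (q, m)) = b'.repr x (Sum.inl (q, 1)) := by
    intro x hx q m
    have hperm1 : ∀ k, ρ (↑m : G) (b' k) = b' ((Equiv.sumCongr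
        (Equiv.prodCongr (Equiv.refl (Quotient sd)) (Equiv.mulLeft m))
        (Equiv.refl {i : ι // P i})) k) := by
      rintro (⟨q', m'⟩ | j)
      · simpa using hρb'_inl m q' m'
      · simpa using hρb'_inr m j
    have h2 := basis_perm_repr b' (ρ (↑m : G)) _ hperm1 x (Sum.inl (q, m))
    rw [hx m] at h2
    rw [h2]
    congr 1
    simp
  have hKEY1 : ∀ x ∈ FF, (∀ n : ↥N, ρ (↑n : G) x = x) → ∃ f ∈ FF, νe f = x := by
    intro x hxF hx
    set c : Quotient sd → R := fun q => b'.repr x (Sum.inl (q, 1)) with hcdef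
    refine ⟨∑ q : Quotient sd, c q • b' (Sum.inl (q, 1)), ?_, ?_⟩
    · exact Submodule.sum_mem _ fun q _ =>
        Submodule.smul_mem _ _ (Submodule.subset_span ⟨(q, 1), rfl⟩)
    · rw [hνapp]
      have h1 : ∀ n : ↥N, ρ (↑n : G) (∑ q : Quotient sd, c q • b' (Sum.inl (q, 1)))
          = ∑ q : Quotient sd, c q • b' (Sum.inl (q, n)) := by
        intro n
        rw [map_sum]
        refine Finset.sum_congr rfl fun q _ => ?_
        rw [map_smul, hρb'_inl, mul_one]
      rw [Finset.sum_congr rfl fun n _ => h1 n]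
      have hxsum : x = ∑ z : Quotient sd × ↥N, b'.repr x (Sum.inl z) • b' (Sum.inl z) := by
        have hrep := b'.sum_repr x
        rw [Fintype.sum_sum_type] at hrep
        have h2 : (∑ j, b'.repr x (Sum.inr j) • b' (Sum.inr j)) = 0 :=
          Finset.sum_eq_zero fun j _ => by rw [(hmemFF x).mp hxF j, zero_smul]
        rw [h2, add_zero] at hrep
        exact hrep.symm
      rw [hxsum, Fintype.sum_prod_type, Finset.sum_comm]
      refine Finset.sum_congr rfl fun q _ => Finset.sum_congr rfl fun n _ => ?_
      rw [hconst_repr x hx q n]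
  -- the projection onto TT along FF
  set ψ : U →ₗ[R] U :=
    TT.subtype.comp (Submodule.linearProjOfIsCompl TT FF hcompl.symm) with hψdef
  have hψT : ∀ x : U, ψ x ∈ TT := fun x =>
    (Submodule.linearProjOfIsCompl TT FF hcompl.symm x).2
  have hψt : ∀ t ∈ TT, ψ t = t := by
    intro t ht
    have h1 := Submodule.linearProjOfIsCompl_apply_left hcompl.symm (⟨t, ht⟩ : ↥TT)
    have h2 : ψ t = ↑(Submodule.linearProjOfIsCompl TT FF hcompl.symm t) := rfl
    rw [h2]
    exact congrArg Subtype.val h1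
  have hψf : ∀ f ∈ FF, ψ f = 0 := by
    intro f hf
    have h1 : Submodule.linearProjOfIsCompl TT FF hcompl.symm f = 0 :=
      Submodule.linearProjOfIsCompl_apply_right' hcompl.symm hf
    have h2 : ψ f = ↑(Submodule.linearProjOfIsCompl TT FF hcompl.symm f) := rfl
    rw [h2, h1]
    rfl
  have hψsub : ∀ x : U, x - ψ x ∈ FF := by
    intro x
    have h1 : (FF.linearProjOfIsCompl TT hcompl x : U) + (TT.linearProjOfIsCompl FF hcompl.symm x : U) = x :=
      Submodule.projection_add_projection_eq_self hcompl x
    have h2 : x - ψ x = ↑(FF.linearProjOfIsCompl TT hcompl x) := by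
      have h3 : ψ x = ↑(TT.linearProjOfIsCompl FF hcompl.symm x) := rfl
      rw [h3]
      linear_combination (norm := module) -h1
    rw [h2]
    exact (FF.linearProjOfIsCompl TT hcompl x).2
  -- Lemma A : X ⊓ FF = ⊥
  have hA : X ⊓ FF = ⊥ := by
    apply nak_helper (R := R) (U := U) p hres
    intro x hx
    obtain ⟨hxX, hxF⟩ := hx
    have hxτ : τe x = x := hXτ x hxX
    have hxσ : σe x = x := hXσ x hxX
    obtain ⟨f, hfF, hfν⟩ := hKEY1 x hxF (hfixN_of_τ x hxτ)
    -- p • x = νe (ν'e f)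
    have heq : (p : R) • x = νe (ν'e f) := by
      rw [← hνν'comm, hfν, hν'fixσ x hxσ]
    obtain ⟨w, hwτ, hwa⟩ := hL2 x f hxσ hxτ heq
    obtain ⟨y, hyY, x', hx'X, hyx⟩ := hdecomp w hwτ
    have hxw : x = ν'e y + (p : R) • x' := by
      rw [hwa, ← hyx, map_add, hν'fixσ x' (hXσ x' hx'X)]
    have hν'yY : ν'e y ∈ Y := hYν' y hyY
    have hν'y0 : ν'e y = 0 := by
      apply hYX0 _ hν'yY
      have h5 : ν'e y = x - (p : R) • x' := by rw [hxw]; abel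
      rw [h5]
      exact X.sub_mem hxX (X.smul_mem _ hx'X)
    have hxpx' : x = (p : R) • x' := by rw [hxw, hν'y0, zero_add]
    refine ⟨x', ⟨hx'X, ?_⟩, hxpx'⟩
    apply hFFpure
    rw [← hxpx']
    exact hxF
  -- the image of X under ψ
  set Xps : Submodule R U := X.map ψ with hXpsdef
  have hXps_le_T : Xps ≤ TT := by
    rintro x ⟨x₀, _, rfl⟩
    exact hψT x₀
  -- Lemma B : purity of ψ X in TT
  have hB : ∀ t ∈ TT, (p : R) • t ∈ Xps → t ∈ Xps := by
    intro t ht hpt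
    obtain ⟨x₀, hx₀X, hx₀ψ⟩ := hpt
    -- x₀ = ν f + p t with f ∈ FF
    have hgF : x₀ - (p : R) • t ∈ FF := by
      have h1 : x₀ - ψ x₀ ∈ FF := hψsub x₀
      rwa [hx₀ψ] at h1
    have hx₀τ : τe x₀ = x₀ := hXτ x₀ hx₀X
    have hx₀σ : σe x₀ = x₀ := hXσ x₀ hx₀X
    have htτ : τe t = t := hTτ t ht
    have hgfix : ∀ n : ↥N, ρ (↑n : G) (x₀ - (p : R) • t) = x₀ - (p : R) • t := by
      intro n
      rw [map_sub, map_smul, hfixN_of_τ x₀ hx₀τ n, hfixN_of_τ t htτ n]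
    obtain ⟨f, hfF, hfν⟩ := hKEY1 _ hgF hgfix
    -- p x₀ = ν ν' f + p ν' t
    set d : U := ν'e t with hddef
    have hpx₀ : (p : R) • x₀ = νe (ν'e f) + (p : R) • d := by
      have h1 : ν'e x₀ = (p : R) • x₀ := hν'fixσ x₀ hx₀σ
      have h2 : ν'e x₀ = ν'e (x₀ - (p : R) • t) + (p : R) • d := by
        rw [hddef, ← map_smul, ← map_add]
        congr 1
        abel
      rw [← h1, h2, ← hfν, hνν'comm]
    -- d is σ-fixed
    have hdσ : σe d = d := by
      have h1 : (p : R) • (σe d - d) = 0 := by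
        have h2 : (p : R) • σe d = σe ((p : R) • d) := (map_smul σe _ _).symm
        have h3 : (p : R) • d = (p : R) • x₀ - νe (ν'e f) := by rw [hpx₀]; abel
        rw [smul_sub, h2, h3, map_sub, map_smul, hx₀σ, hνGl, ← h3]
        abel
      rcases hU0 _ _ h1 with h | h
      · exact absurd h hpR
      · exact sub_eq_zero.mp h
    set a : U := x₀ - d with hadef
    have haσ : σe a = a := by rw [hadef, map_sub, hx₀σ, hdσ]
    have haτ : τe a = a := hτfix_of_σ a haσ
    have haeq : (p : R) • a = νe (ν'e f) := by
      rw [hadef, smul_sub, hpx₀]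
      abel
    obtain ⟨w, hwτ, hwa⟩ := hL2 a f haσ haτ haeq
    obtain ⟨ym, hymY, xm, hxmX, hymx⟩ := hdecomp w hwτ
    obtain ⟨yt, hytY, xt, hxtX, hytx⟩ := hdecomp t htτ
    -- x₀ = ν'(ym + yt) + p (xm + xt)
    have hx₀eq : x₀ = ν'e (ym + yt) + (p : R) • (xm + xt) := by
      have h1 : x₀ = a + d := by rw [hadef]; abel
      have h2 : d = ν'e yt + (p : R) • xt := by
        rw [hddef, ← hytx, map_add, hν'fixσ xt (hXσ xt hxtX)]
      have h3 : a = ν'e ym + (p : R) • xm := by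
        rw [hwa, ← hymx, map_add, hν'fixσ xm (hXσ xm hxmX)]
      rw [h1, h2, h3, map_add, smul_add]
      abel
    have hν'y0 : ν'e (ym + yt) = 0 := by
      apply hYX0 _ (hYν' _ (Y.add_mem hymY hytY))
      have h5 : ν'e (ym + yt) = x₀ - (p : R) • (xm + xt) := by rw [hx₀eq]; abel
      rw [h5]
      exact X.sub_mem hx₀X (X.smul_mem _ (X.add_mem hxmX hxtX))
    have hx₀p : x₀ = (p : R) • (xm + xt) := by rw [hx₀eq, hν'y0, zero_add]
    -- conclude : t = ψ (xm + xt)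
    have hpψ : (p : R) • t = (p : R) • ψ (xm + xt) := by
      rw [← hx₀ψ, hx₀p, map_smul]
    have htψ : t = ψ (xm + xt) := by
      have h6 : (p : R) • (t - ψ (xm + xt)) = 0 := by rw [smul_sub, hpψ, sub_self]
      rcases hU0 _ _ h6 with h | h
      · exact absurd h hpR
      · exact sub_eq_zero.mp h
    rw [htψ]
    exact ⟨xm + xt, X.add_mem hxmX hxtX, rfl⟩
  -- split off a complement Z of ψ X inside TT
  obtain ⟨Z, hZT, hZdisj, hZsup⟩ := split_pure (R := R) (U := U) p hpR hres Xps TT hXps_le_T hB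
  -- final assembly
  refine ⟨FF, Z, ?_, ?_, ?_, ?_, ?_, ?_, ?_⟩
  · -- FF ⊔ Z ⊔ X = ⊤
    apply le_antisymm le_top
    intro u _
    have h1 : ψ u ∈ Xps ⊔ Z := by rw [hZsup]; exact hψT u
    obtain ⟨w, hwXps, z, hzZ, hwz⟩ := Submodule.mem_sup.mp h1
    obtain ⟨x₁, hx₁X, hwx⟩ := hwXps
    rw [← hwx] at hwz
    have hu : u = (((u - ψ u) - (x₁ - ψ x₁)) + z) + x₁ := by
      linear_combination (norm := module) -hwz
    rw [hu]
    exact Submodule.add_mem_sup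
      (Submodule.add_mem_sup (FF.sub_mem (hψsub u) (hψsub x₁)) hzZ) hx₁X
  · -- Disjoint FF (Z ⊔ X)
    rw [disjoint_iff, eq_bot_iff]
    rintro u ⟨huF, huZX⟩
    obtain ⟨z, hzZ, x₂, hx₂X, hzx⟩ := Submodule.mem_sup.mp huZX
    have h0 : ψ u = 0 := hψf u huF
    have hz' : ψ z = z := hψt z (hZT hzZ)
    have h1 : z + ψ x₂ = 0 := by
      rw [← hz', ← map_add, hzx, h0]
    have hzXps : z ∈ Xps := by
      have h2 : z = -ψ x₂ := eq_neg_of_add_eq_zero_left h1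
      rw [h2]
      exact Xps.neg_mem ⟨x₂, hx₂X, rfl⟩
    have hz0 : z = 0 := by
      have h3 : z ∈ Xps ⊓ Z := ⟨hzXps, hzZ⟩
      rw [hZdisj] at h3
      simpa using h3
    have hψx₂0 : ψ x₂ = 0 := by
      rw [hz0, zero_add] at h1
      exact h1
    have hx₂F : x₂ ∈ FF := by
      have h4 := hψsub x₂
      rwa [hψx₂0, sub_zero] at h4
    have hx₂0 : x₂ = 0 := by
      have h5 : x₂ ∈ X ⊓ FF := ⟨hx₂X, hx₂F⟩
      rw [hA] at h5
      simpa using h5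
    show u ∈ (⊥ : Submodule R U)
    rw [← hzx, hz0, hx₂0]
    simp
  · -- Disjoint Z X
    rw [disjoint_iff, eq_bot_iff]
    rintro u ⟨huZ, huX⟩
    have h1 : ψ u = u := hψt u (hZT huZ)
    have h2 : u ∈ Xps ⊓ Z := ⟨⟨u, huX, h1⟩, huZ⟩
    rw [hZdisj] at h2
    simpa using h2
  · -- FF is N-stable
    intro n hn
    rw [Submodule.map_le_iff_le_comap]
    intro f hf
    exact hFFstable ⟨n, hn⟩ f hf
  · -- N acts trivially on Z
    intro n hn z hz
    exact hTfix z (hZT hz) ⟨n, hn⟩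
  · -- FF is RN-free with permutation basis
    have hli : LinearIndependent R (fun z : Quotient sd × ↥N => b' (Sum.inl z)) :=
      b'.linearIndependent.comp Sum.inl Sum.inl_injective
    refine ⟨Quotient sd, Module.Basis.span hli, ?_⟩
    intro n i m
    rw [Module.Basis.span_apply, Module.Basis.span_apply]
    exact hρb'_inl n i m
  · -- FF has no nonzero trivial summand
    intro W W' hWW' hdisj' _hWinv hW'inv hWtriv
    apply nak_helper (R := R) (U := U) p hres
    intro w hw
    have hwF : w ∈ FF := by
      rw [← hWW']
      exact (le_sup_left : W ≤ W ⊔ W') hw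
    have hwfix : ∀ n : ↥N, ρ (↑n : G) w = w := fun n => hWtriv ↑n n.2 w hw
    obtain ⟨f, hfF, hfν⟩ := hKEY1 w hwF hwfix
    have hfWW' : f ∈ W ⊔ W' := by rw [hWW']; exact hfF
    obtain ⟨w₁, hw₁, w₂, hw₂, hw12⟩ := Submodule.mem_sup.mp hfWW'
    have hν1 : νe w₁ = (p : R) • w₁ := hνfix' w₁ (fun n => hWtriv ↑n n.2 w₁ hw₁)
    have hν2 : νe w₂ ∈ W' := by
      rw [hνapp]
      exact Submodule.sum_mem _ fun n _ => hW'inv ↑n n.2 ⟨w₂, hw₂, rfl⟩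
    have hkey : w - (p : R) • w₁ = νe w₂ := by
      rw [← hν1, ← hfν, ← hw12, map_add]
      abel
    have h0 : w - (p : R) • w₁ = 0 := by
      have hmem1 : w - (p : R) • w₁ ∈ W := W.sub_mem hw (W.smul_mem _ hw₁)
      have hmem2 : w - (p : R) • w₁ ∈ W' := hkey ▸ hν2
      exact Submodule.disjoint_def.mp hdisj' _ hmem1 hmem2
    exact ⟨w₁, hw₁, sub_eq_zero.mp h0⟩
end
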